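/- arXiv:1507.01332 — 7 statements merged into one kernel-verified Lean document; each statement's English description precedes it below -/
import Mathlib

section
/- Let ξ be any switching signal and let (S, I) be a solution of the switched SIRS system. If S(0) ≥ 0, I(0) ≥ 0 and S(0) + I(0) ≤ N, then (S(t), I(t)) ∈ ∇ for all t ≥ 0; moreover, if in addition S(0) > 0 and I(0) > 0, then S(t) > 0 and I(t) > 0 for all t ≥ 0. -/
open Filter MeasureTheory

/-- The state space of environments: `true` is `+`, `false` is `−`. -/
abbrev Env := Bool

/-- `ξ` is locally constant (as a function on `[0,∞)`) at the point `t`. -/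
def ContPt (ξ : ℝ → Env) (t : ℝ) : Prop :=
  ∀ᶠ s in nhdsWithin t (Set.Ici (0:ℝ)), ξ s = ξ t

/-- A switching signal: right-continuous, piecewise constant,
with locally finite set of discontinuities in `[0,∞)`. -/
def IsSwitchingSignal (ξ : ℝ → Env) : Prop :=
  (∀ t : ℝ, 0 ≤ t → ∀ᶠ s in nhdsWithin t (Set.Ici t), ξ s = ξ t) ∧
  (∀ T : ℝ, {t : ℝ | 0 ≤ t ∧ t ≤ T ∧ ¬ ContPt ξ t}.Finite)

/-- `(S, I)` is a solution of the switched SIRS system driven by `ξ`: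
continuous on `[0,∞)` and satisfying the SIRS equations at every
`t ≥ 0` which is not a discontinuity of `ξ`. -/
def IsSIRSSolution (N : ℝ) (a b c : Env → ℝ) (ξ : ℝ → Env) (S I : ℝ → ℝ) : Prop :=
  ContinuousOn S (Set.Ici (0:ℝ)) ∧ ContinuousOn I (Set.Ici (0:ℝ)) ∧
  ∀ t : ℝ, 0 ≤ t → ContPt ξ t →
    HasDerivWithinAt S (-(a (ξ t) * S t * I t) + c (ξ t) * (N - S t - I t)) (Set.Ici (0:ℝ)) t ∧
    HasDerivWithinAt I (a (ξ t) * S t * I t - b (ξ t) * I t) (Set.Ici (0:ℝ)) t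

/-- `ξ` has mean growth rate `lam`:
`lim_{t→∞} (1/t) ∫₀ᵗ (a(ξ(s))·N − b(ξ(s))) ds = lam`. -/
def HasMeanGrowthRate (N : ℝ) (a b : Env → ℝ) (ξ : ℝ → Env) (lam : ℝ) : Prop :=
  Tendsto (fun t : ℝ => (1 / t) * ∫ s in (0:ℝ)..t, (a (ξ s) * N - b (ξ s)))
    atTop (nhds lam)

open Set in
/-- One-sided comparison: if `f' + K f ≥ 0` (right derivatives) then `f e^{Kt}` is
nondecreasing. -/
lemma mono_exp {f f' : ℝ → ℝ} {K p q : ℝ} (hpq : p ≤ q)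
    (hf : ContinuousOn f (Icc p q))
    (hd : ∀ x ∈ Ico p q, HasDerivWithinAt f (f' x) (Ici x) x)
    (hineq : ∀ x ∈ Ico p q, 0 ≤ f' x + K * f x) :
    f p * Real.exp (K * p) ≤ f q * Real.exp (K * q) := by
  have hg : ∀ x ∈ Ico p q, HasDerivWithinAt (fun t => -(f t * Real.exp (K * t)))
      (-((f' x + K * f x) * Real.exp (K * x))) (Ici x) x := by
    intro x hx
    have h1 : HasDerivAt (fun t => Real.exp (K * t)) (K * Real.exp (K * x)) x := by
      simpa [mul_comm, Function.comp_def] using ((Real.hasDerivAt_exp (K * x)).comp x ((hasDerivAt_id x).const_mul K))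
    have h2 := ((hd x hx).mul h1.hasDerivWithinAt).neg
    exact h2.congr_deriv (by ring)
  have key := image_le_of_deriv_right_le_deriv_boundary
    (f := fun t => -(f t * Real.exp (K * t)))
    (f' := fun x => -((f' x + K * f x) * Real.exp (K * x)))
    (B := fun _ => -(f p * Real.exp (K * p))) (B' := fun _ => 0)
    (a := p) (b := q)
    ((hf.mul (Real.continuous_exp.comp (continuous_const.mul continuous_id)).continuousOn).neg)
    hg le_rfl continuousOn_const
    (fun x _ => hasDerivWithinAt_const x _ _)
    (fun x hx => by
      have := hineq x hx
      have e := (Real.exp_pos (K * x)).le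
      show -((f' x + K * f x) * Real.exp (K * x)) ≤ 0
      nlinarith [mul_nonneg this e])
  have := key (right_mem_Icc.2 hpq)
  linarith

/-- Nonnegativity persists for scalar quantities whose right derivative satisfies
a linear lower bound where the quantity is nonpositive. -/
lemma nonneg_persist {f f' : ℝ → ℝ}
    (hcont : ContinuousOn f (Set.Ici 0))
    (hd : ∀ x : ℝ, 0 ≤ x → HasDerivWithinAt f (f' x) (Set.Ici x) x)
    (hK : ∀ T : ℝ, 0 < T → ∃ K : ℝ, ∀ x ∈ Set.Icc (0:ℝ) T, f x ≤ 0 → 0 ≤ f' x + K * f x)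
    (h0 : 0 ≤ f 0) : ∀ t : ℝ, 0 ≤ t → 0 ≤ f t := by
  intro t1 ht1
  by_contra hneg
  push_neg at hneg
  have ht1pos : 0 < t1 := by
    rcases ht1.lt_or_eq with h | h
    · exact h
    · exfalso; rw [← h] at hneg; linarith
  obtain ⟨K, hKc⟩ := hK t1 ht1pos
  set A := Set.Icc (0:ℝ) t1 ∩ f ⁻¹' Set.Ici 0 with hA
  have hAsub : A ⊆ Set.Icc 0 t1 := Set.inter_subset_left
  have hAne : A.Nonempty := ⟨0, ⟨le_rfl, ht1⟩, h0⟩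
  have hAclosed : IsClosed A :=
    (hcont.mono Set.Icc_subset_Ici_self).preimage_isClosed_of_isClosed isClosed_Icc isClosed_Ici
  have hAcomp : IsCompact A := isCompact_Icc.of_isClosed_subset hAclosed hAsub
  set t0 := sSup A with ht0def
  have ht0A : t0 ∈ A := hAcomp.sSup_mem hAne
  have h0t0 : 0 ≤ t0 := ht0A.1.1
  have hft0 : 0 ≤ f t0 := ht0A.2
  have ht0lt : t0 < t1 := lt_of_le_of_ne ht0A.1.2 (fun h => by rw [h] at hft0; linarith)
  have hneg' : ∀ x, t0 < x → x ≤ t1 → f x < 0 := by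
    intro x hx1 hx2
    by_contra h
    push_neg at h
    exact absurd (le_csSup hAcomp.bddAbove ⟨⟨le_trans h0t0 hx1.le, hx2⟩, h⟩) (not_le.2 hx1)
  have hnonpos : ∀ x ∈ Set.Icc t0 t1, f x ≤ 0 := by
    intro x hx
    rcases hx.1.lt_or_eq with h | h
    · exact (hneg' x h hx.2).le
    · rw [← h]
      have htend : Filter.Tendsto f (nhdsWithin t0 (Set.Ioi t0)) (nhds (f t0)) :=
        (hcont t0 h0t0).mono_left (nhdsWithin_mono _ (fun y hy => le_trans h0t0 (le_of_lt hy)))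
      exact le_of_tendsto htend (Filter.eventually_of_mem
        (Ioc_mem_nhdsGT_of_mem ⟨le_rfl, ht0lt⟩) (fun y hy => (hneg' y hy.1 hy.2).le))
  have key := mono_exp (K := K) ht0lt.le
    (hcont.mono (fun x hx => le_trans h0t0 hx.1))
    (fun x hx => hd x (le_trans h0t0 hx.1))
    (fun x hx => hKc x ⟨le_trans h0t0 hx.1, hx.2.le⟩ (hnonpos x ⟨hx.1, hx.2.le⟩))
  have h1 := mul_nonneg hft0 (Real.exp_pos (K * t0)).le
  have h2 := mul_neg_of_neg_of_pos hneg (Real.exp_pos (K * t1))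
  linarith

open Set in
/-- At every time `t ≥ 0` (including switching times), the solution has the
expected right derivative, thanks to right-continuity of the signal. -/
lemma sirs_right_deriv (N : ℝ) (a b c : Env → ℝ) (ξ : ℝ → Env) (hξ : IsSwitchingSignal ξ)
    (S I : ℝ → ℝ) (hsol : IsSIRSSolution N a b c ξ S I) (t : ℝ) (ht : 0 ≤ t) :
    HasDerivWithinAt S (-(a (ξ t) * S t * I t) + c (ξ t) * (N - S t - I t)) (Set.Ici t) t ∧
    HasDerivWithinAt I (a (ξ t) * S t * I t - b (ξ t) * I t) (Set.Ici t) t := by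
  by_cases hcp : ContPt ξ t
  · obtain ⟨h1, h2⟩ := hsol.2.2 t ht hcp
    exact ⟨h1.mono (Ici_subset_Ici.2 ht), h2.mono (Ici_subset_Ici.2 ht)⟩
  obtain ⟨δ, hδ0, hδ⟩ : ∃ δ > 0, ∀ s, t ≤ s → s < t + δ → ξ s = ξ t := by
    have h := hξ.1 t ht
    rw [Filter.eventually_iff, Metric.mem_nhdsWithin_iff] at h
    obtain ⟨δ, hδ0, hδ⟩ := h
    refine ⟨δ, hδ0, fun s hs1 hs2 => hδ ⟨?_, hs1⟩⟩
    rw [Metric.mem_ball, Real.dist_eq, abs_of_nonneg (by linarith)]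
    linarith
  have hDfin : {s : ℝ | 0 ≤ s ∧ s ≤ t + δ ∧ ¬ ContPt ξ s}.Finite := hξ.2 (t + δ)
  set D := {s : ℝ | 0 ≤ s ∧ s ≤ t + δ ∧ ¬ ContPt ξ s}
  obtain ⟨ε, hε0, hεδ, hεD⟩ : ∃ ε > 0, ε ≤ δ ∧ ∀ s ∈ Ioo t (t + ε), s ∉ D := by
    have hD' : (D ∩ Ioi t).Finite := hDfin.inter_of_left _
    rcases eq_empty_or_nonempty (D ∩ Ioi t) with he | hne
    · exact ⟨δ, hδ0, le_rfl, fun s hs hsD => (eq_empty_iff_forall_notMem.1 he s) ⟨hsD, hs.1⟩⟩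
    · have hne' : hD'.toFinset.Nonempty := by simpa [Set.Finite.toFinset_nonempty] using hne
      set m := hD'.toFinset.min' hne' with hm
      have hmmem : m ∈ D ∩ Ioi t := hD'.mem_toFinset.mp (hD'.toFinset.min'_mem hne')
      have htm : t < m := mem_Ioi.1 hmmem.2
      refine ⟨min δ (m - t), lt_min hδ0 (by linarith), min_le_left _ _,
        fun s hs hsD => ?_⟩
      have hsm : m ≤ s := hD'.toFinset.min'_le s (hD'.mem_toFinset.mpr ⟨hsD, hs.1⟩)
      have : s < t + (m - t) := lt_of_lt_of_le hs.2 (by linarith [min_le_right δ (m - t)])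
      linarith
  have hsub : Ioo t (t + ε) ⊆ Ici (0:ℝ) := fun s hs => le_trans ht (le_of_lt hs.1)
  set gS : ℝ → ℝ := fun s => -(a (ξ t) * S s * I s) + c (ξ t) * (N - S s - I s) with hgS
  set gI : ℝ → ℝ := fun s => a (ξ t) * S s * I s - b (ξ t) * I s with hgI
  have hds : ∀ s ∈ Ioo t (t + ε), HasDerivAt S (gS s) s ∧ HasDerivAt I (gI s) s := by
    intro s hs
    have hs0 : (0:ℝ) < s := lt_of_le_of_lt ht hs.1
    have hcps : ContPt ξ s := by
      by_contra hcon
      exact hεD s hs ⟨hs0.le, by linarith [hs.2, hεδ], hcon⟩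
    have hξs : ξ s = ξ t := hδ s hs.1.le (by linarith [hs.2, hεδ])
    obtain ⟨h1, h2⟩ := hsol.2.2 s hs0.le hcps
    rw [hξs] at h1 h2
    exact ⟨h1.hasDerivAt (Ici_mem_nhds hs0), h2.hasDerivAt (Ici_mem_nhds hs0)⟩
  have hIoo : Ioo t (t + ε) ∈ nhdsWithin t (Ioi t) :=
    Ioo_mem_nhdsGT_of_mem ⟨le_rfl, by linarith⟩
  have hmonol : nhdsWithin t (Ioi t) ≤ nhdsWithin t (Ici (0:ℝ)) :=
    nhdsWithin_mono t (fun s hs => le_trans ht (le_of_lt hs))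
  have hcS : Tendsto S (nhdsWithin t (Ioi t)) (nhds (S t)) :=
    ((hsol.1 t (mem_Ici.2 ht)).mono_left hmonol)
  have hcI : Tendsto I (nhdsWithin t (Ioi t)) (nhds (I t)) :=
    ((hsol.2.1 t (mem_Ici.2 ht)).mono_left hmonol)
  have hgtS : Tendsto gS (nhdsWithin t (Ioi t)) (nhds (gS t)) := by
    exact (((tendsto_const_nhds.mul hcS).mul hcI).neg.add
      (tendsto_const_nhds.mul ((tendsto_const_nhds.sub hcS).sub hcI)))
  have hgtI : Tendsto gI (nhdsWithin t (Ioi t)) (nhds (gI t)) := by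
    exact (((tendsto_const_nhds.mul hcS).mul hcI).sub (tendsto_const_nhds.mul hcI))
  constructor
  · apply hasDerivWithinAt_Ici_of_tendsto_deriv (s := Ioo t (t + ε))
    · exact fun s hs => ((hds s hs).1.differentiableAt).differentiableWithinAt
    · exact (hsol.1 t (mem_Ici.2 ht)).mono hsub
    · exact hIoo
    · apply Tendsto.congr' _ hgtS
      exact eventuallyEq_of_mem hIoo (fun s hs => ((hds s hs).1.deriv).symm)
  · apply hasDerivWithinAt_Ici_of_tendsto_deriv (s := Ioo t (t + ε))
    · exact fun s hs => ((hds s hs).2.differentiableAt).differentiableWithinAt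
    · exact (hsol.2.1 t (mem_Ici.2 ht)).mono hsub
    · exact hIoo
    · apply Tendsto.congr' _ hgtI
      exact eventuallyEq_of_mem hIoo (fun s hs => ((hds s hs).2.deriv).symm)

/-- solutions starting in the triangle `∇` stay in `∇`;
moreover solutions with positive initial data stay positive. -/
theorem sirs_triangle_invariant
    (N : ℝ) (hN : 0 < N) (a b c : Env → ℝ)
    (ha : ∀ σ, 0 < a σ) (hb : ∀ σ, 0 < b σ) (hc : ∀ σ, 0 < c σ)
    (ξ : ℝ → Env) (hξ : IsSwitchingSignal ξ)
    (S I : ℝ → ℝ) (hsol : IsSIRSSolution N a b c ξ S I)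
    (hS0 : 0 ≤ S 0) (hI0 : 0 ≤ I 0) (hsum : S 0 + I 0 ≤ N) :
    (∀ t : ℝ, 0 ≤ t → 0 ≤ S t ∧ 0 ≤ I t ∧ S t + I t ≤ N) ∧
    (0 < S 0 → 0 < I 0 → ∀ t : ℝ, 0 ≤ t → 0 < S t ∧ 0 < I t) := by
  have hScont : ContinuousOn S (Set.Ici (0:ℝ)) := hsol.1
  have hIcont : ContinuousOn I (Set.Ici (0:ℝ)) := hsol.2.1
  have hdS : ∀ t : ℝ, 0 ≤ t →
      HasDerivWithinAt S (-(a (ξ t) * S t * I t) + c (ξ t) * (N - S t - I t)) (Set.Ici t) t :=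
    fun t ht => (sirs_right_deriv N a b c ξ hξ S I hsol t ht).1
  have hdI : ∀ t : ℝ, 0 ≤ t →
      HasDerivWithinAt I (a (ξ t) * S t * I t - b (ξ t) * I t) (Set.Ici t) t :=
    fun t ht => (sirs_right_deriv N a b c ξ hξ S I hsol t ht).2
  have hdR : ∀ t : ℝ, 0 ≤ t →
      HasDerivWithinAt (fun s => N - S s - I s)
        (b (ξ t) * I t - c (ξ t) * (N - S t - I t)) (Set.Ici t) t := by
    intro t ht
    have h := ((hasDerivWithinAt_const t (Set.Ici t) N).sub (hdS t ht)).sub (hdI t ht)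
    exact h.congr_deriv (by ring)
  have hRcont : ContinuousOn (fun s => N - S s - I s) (Set.Ici (0:ℝ)) :=
    (continuousOn_const.sub hScont).sub hIcont
  set aM := max (a true) (a false) with haMdef
  set bM := max (b true) (b false) with hbMdef
  have haM : ∀ σ, a σ ≤ aM := fun σ => by cases σ <;> simp [haMdef]
  have hbM : ∀ σ, b σ ≤ bM := fun σ => by cases σ <;> simp [hbMdef]
  have haM0 : 0 < aM := lt_of_lt_of_le (ha true) (haM true)
  have hbM0 : 0 < bM := lt_of_lt_of_le (hb true) (hbM true)
  -- Step 1 : `I` stays nonnegative.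
  have hInn : ∀ t : ℝ, 0 ≤ t → 0 ≤ I t := by
    apply nonneg_persist hIcont hdI _ hI0
    intro T hT
    obtain ⟨M, hM⟩ := (isCompact_Icc (a := (0:ℝ)) (b := T)).exists_bound_of_continuousOn
      (hScont.mono Set.Icc_subset_Ici_self)
    have hM0 : 0 ≤ M := le_trans (norm_nonneg _) (hM 0 ⟨le_rfl, hT.le⟩)
    refine ⟨-(aM * M), fun x hx hfx => ?_⟩
    have hSx : |S x| ≤ M := by simpa [Real.norm_eq_abs] using hM x hx
    have h1 : a (ξ x) * S x ≤ aM * M := by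
      calc a (ξ x) * S x ≤ a (ξ x) * |S x| :=
            mul_le_mul_of_nonneg_left (le_abs_self _) (ha _).le
        _ ≤ aM * M := mul_le_mul (haM _) hSx (abs_nonneg _) haM0.le
    have h2 : a (ξ x) * S x - b (ξ x) - aM * M ≤ 0 := by linarith [(hb (ξ x)).le]
    have h3 := mul_nonneg_of_nonpos_of_nonpos h2 hfx
    show 0 ≤ a (ξ x) * S x * I x - b (ξ x) * I x + -(aM * M) * I x
    nlinarith [h3]
  -- Step 2 : `N - S - I` stays nonnegative.
  have hRnn : ∀ t : ℝ, 0 ≤ t → 0 ≤ N - S t - I t := by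
    have key := nonneg_persist (f := fun s => N - S s - I s)
      (f' := fun t => b (ξ t) * I t - c (ξ t) * (N - S t - I t))
      hRcont hdR ?_ (by show (0:ℝ) ≤ N - S 0 - I 0; linarith)
    · exact fun t ht => key t ht
    · intro T hT
      refine ⟨0, fun x hx hfx => ?_⟩
      have h1 : 0 ≤ b (ξ x) * I x := mul_nonneg (hb _).le (hInn x hx.1)
      have h2 : 0 ≤ -(c (ξ x)) * (N - S x - I x) :=
        mul_nonneg_of_nonpos_of_nonpos (neg_nonpos.2 (hc _).le) hfx
      show 0 ≤ b (ξ x) * I x - c (ξ x) * (N - S x - I x) + 0 * (N - S x - I x)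
      nlinarith [h1, h2]
  -- Step 3 : `S` stays nonnegative.
  have hSnn : ∀ t : ℝ, 0 ≤ t → 0 ≤ S t := by
    apply nonneg_persist hScont hdS _ hS0
    intro T hT
    refine ⟨0, fun x hx hfx => ?_⟩
    have h1 : a (ξ x) * S x * I x ≤ 0 :=
      mul_nonpos_of_nonpos_of_nonneg
        (mul_nonpos_of_nonneg_of_nonpos (ha _).le hfx) (hInn x hx.1)
    have h2 : 0 ≤ c (ξ x) * (N - S x - I x) := mul_nonneg (hc _).le (hRnn x hx.1)
    show 0 ≤ -(a (ξ x) * S x * I x) + c (ξ x) * (N - S x - I x) + 0 * S x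
    linarith
  refine ⟨fun t ht => ⟨hSnn t ht, hInn t ht, by linarith [hRnn t ht]⟩, ?_⟩
  intro hS0' hI0' t ht
  constructor
  · -- positivity of S
    have key := mono_exp (f := S)
      (f' := fun x => -(a (ξ x) * S x * I x) + c (ξ x) * (N - S x - I x))
      (K := aM * N) (p := 0) (q := t) ht (hScont.mono Set.Icc_subset_Ici_self)
      (fun x hx => hdS x hx.1) ?_
    · have e0 : Real.exp (aM * N * 0) = 1 := by norm_num
      rw [e0, mul_one] at key
      by_contra hle
      push_neg at hle
      nlinarith [Real.exp_pos (aM * N * t), key,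
        mul_nonneg (neg_nonneg.2 hle) (Real.exp_pos (aM * N * t)).le]
    · intro x hx
      have hIN : I x ≤ N := by linarith [hRnn x hx.1, hSnn x hx.1]
      have h1 : a (ξ x) * I x ≤ aM * N := mul_le_mul (haM _) hIN (hInn x hx.1) haM0.le
      have h2 : 0 ≤ c (ξ x) * (N - S x - I x) := mul_nonneg (hc _).le (hRnn x hx.1)
      have h3 : 0 ≤ S x := hSnn x hx.1
      show 0 ≤ -(a (ξ x) * S x * I x) + c (ξ x) * (N - S x - I x) + aM * N * S x
      nlinarith [mul_nonneg (sub_nonneg.2 h1) h3]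
  · -- positivity of I
    have key := mono_exp (f := I)
      (f' := fun x => a (ξ x) * S x * I x - b (ξ x) * I x)
      (K := bM) (p := 0) (q := t) ht (hIcont.mono Set.Icc_subset_Ici_self)
      (fun x hx => hdI x hx.1) ?_
    · have e0 : Real.exp (bM * 0) = 1 := by norm_num
      rw [e0, mul_one] at key
      by_contra hle
      push_neg at hle
      nlinarith [Real.exp_pos (bM * t), key,
        mul_nonneg (neg_nonneg.2 hle) (Real.exp_pos (bM * t)).le]
    · intro x hx
      have h1 : 0 ≤ a (ξ x) * S x * I x :=
        mul_nonneg (mul_nonneg (ha _).le (hSnn x hx.1)) (hInn x hx.1)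
      have h2 : 0 ≤ (bM - b (ξ x)) * I x :=
        mul_nonneg (sub_nonneg.2 (hbM (ξ x))) (hInn x hx.1)
      show 0 ≤ a (ξ x) * S x * I x - b (ξ x) * I x + bM * I x
      nlinarith [h1, h2]
end

section
/- Suppose the switching signal ξ has mean growth rate λ > 0, and let (S, I) be a solution of the switched SIRS system with S(0) > 0, I(0) > 0 and S(0) + I(0) ≤ N. Then liminf_{t→∞} (1/t)·∫₀ᵗ I(s) ds ≥ c_min·λ / ((a_max·N + c_max)·a_max) > 0; in particular limsup_{t→∞} I(t) ≥ c_min·λ / ((a_max·N + c_max)·a_max) > 0. -/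
open Filter MeasureTheory

lemma right_deriv_of_switching
    (ξ : ℝ → Env) (hξ : IsSwitchingSignal ξ)
    (f : ℝ → ℝ) (G : Env → ℝ → ℝ)
    (hf : ContinuousOn f (Set.Ici 0))
    (hG : ∀ σ, ContinuousOn (G σ) (Set.Ici 0))
    (hder : ∀ s, 0 ≤ s → ContPt ξ s → HasDerivWithinAt f (G (ξ s) s) (Set.Ici 0) s)
    (t : ℝ) (ht : 0 < t) : HasDerivWithinAt f (G (ξ t) t) (Set.Ioi t) t := by
  by_cases hc : ContPt ξ t
  · exact (hder t ht.le hc).mono (fun x hx => le_of_lt (ht.trans hx))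
  · obtain ⟨u, hu, hIco⟩ := mem_nhdsGE_iff_exists_Ico_subset.1 (hξ.1 t ht.le)
    have hIoosub : Set.Ioo t u ⊆ Set.Ici (0:ℝ) := fun x hx => (ht.trans hx.1).le
    have hcontpt : ∀ s ∈ Set.Ioo t u, ContPt ξ s := by
      intro s hs
      have hmem : Set.Ioo t u ∈ nhdsWithin s (Set.Ici (0:ℝ)) :=
        mem_nhdsWithin_of_mem_nhds (isOpen_Ioo.mem_nhds hs)
      filter_upwards [hmem] with w hw
      rw [hIco ⟨hw.1.le, hw.2⟩, hIco ⟨hs.1.le, hs.2⟩]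
    have hdAt : ∀ s ∈ Set.Ioo t u, HasDerivAt f (G (ξ t) s) s := by
      intro s hs
      have h0s : (0:ℝ) < s := ht.trans hs.1
      have h := hder s h0s.le (hcontpt s hs)
      rw [show ξ s = ξ t from hIco ⟨hs.1.le, hs.2⟩] at h
      exact h.hasDerivAt (Ici_mem_nhds h0s)
    have hdiff : DifferentiableOn ℝ f (Set.Ioo t u) := fun s hs =>
      (hdAt s hs).differentiableAt.differentiableWithinAt
    have hmemIoi : Set.Ioo t u ∈ nhdsWithin t (Set.Ioi t) := Ioo_mem_nhdsGT_of_mem ⟨le_refl t, hu⟩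
    have hlim' : Tendsto (deriv f) (nhdsWithin t (Set.Ioi t)) (nhds (G (ξ t) t)) := by
      have h1 : Tendsto (fun s => G (ξ t) s) (nhdsWithin t (Set.Ioi t)) (nhds (G (ξ t) t)) :=
        ((hG (ξ t)) t (le_of_lt ht)).mono_left
          (nhdsWithin_mono t (fun x (hx : t < x) => (ht.trans hx).le))
      refine h1.congr' ?_
      filter_upwards [hmemIoi] with s hs
      exact ((hdAt s hs).deriv).symm
    have hcw : ContinuousWithinAt f (Set.Ioo t u) t :=
      (hf t ht.le).mono hIoosub
    exact (hasDerivWithinAt_Ici_of_tendsto_deriv hdiff hcw hmemIoi hlim').mono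
      Set.Ioi_subset_Ici_self

lemma integrableOn_switch (ξ : ℝ → Env) (hξ : IsSwitchingSignal ξ) (T : ℝ)
    (K : Env → ℝ → ℝ) (hK : ∀ σ, ContinuousOn (K σ) (Set.Icc 0 T)) :
    IntegrableOn (fun s => K (ξ s) s) (Set.Icc 0 T) := by
  set F := {s : ℝ | 0 ≤ s ∧ s ≤ T ∧ ¬ ContPt ξ s} with hFdef
  have hF : F.Finite := hξ.2 T
  have hsub : Set.Icc 0 T \ F ⊆ Set.Ici (0:ℝ) := fun x hx => hx.1.1
  have hcont : ContinuousOn (fun s => K (ξ s) s) (Set.Icc 0 T \ F) := by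
    intro s hs
    have hcp : ContPt ξ s := by
      by_contra h; exact hs.2 ⟨hs.1.1, hs.1.2, h⟩
    have hev : ∀ᶠ w in nhdsWithin s (Set.Icc 0 T \ F), ξ w = ξ s :=
      hcp.filter_mono (nhdsWithin_mono s hsub)
    have h1 : Tendsto (fun w => K (ξ s) w) (nhdsWithin s (Set.Icc 0 T \ F)) (nhds (K (ξ s) s)) :=
      ((hK (ξ s)) s hs.1).mono Set.diff_subset
    exact h1.congr' (hev.mono fun w hw => by simp only [hw])
  have h0 : volume.restrict (Set.Icc 0 T \ F) = volume.restrict (Set.Icc 0 T) :=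
    Measure.restrict_congr_set (diff_ae_eq_self.2
      (measure_mono_null Set.inter_subset_right (hF.measure_zero _)))
  have hmeas : AEStronglyMeasurable (fun s => K (ξ s) s) (volume.restrict (Set.Icc 0 T)) := by
    rw [← h0]
    exact hcont.aestronglyMeasurable (measurableSet_Icc.diff hF.measurableSet)
  obtain ⟨C1, hC1⟩ := isCompact_Icc.exists_bound_of_continuousOn (hK true)
  obtain ⟨C2, hC2⟩ := isCompact_Icc.exists_bound_of_continuousOn (hK false)
  refine ⟨hmeas, HasFiniteIntegral.restrict_of_bounded (C := max C1 C2)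
    measure_Icc_lt_top ?_⟩
  refine (ae_restrict_iff' measurableSet_Icc).2 (Eventually.of_forall fun s hs => ?_)
  cases hξs : ξ s
  · exact le_trans (hC2 s hs) (le_max_right _ _)
  · exact le_trans (hC1 s hs) (le_max_left _ _)

lemma monotone_of_right_deriv_nonneg {g g' : ℝ → ℝ} {p q : ℝ} (hpq : p ≤ q)
    (hcont : ContinuousOn g (Set.Icc p q))
    (hder : ∀ x ∈ Set.Ioo p q, HasDerivWithinAt g (g' x) (Set.Ioi x) x)
    (hnn : ∀ x ∈ Set.Ioo p q, 0 ≤ g' x) : g p ≤ g q := by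
  have h := intervalIntegral.sub_le_integral_of_hasDeriv_right_of_le (g := fun x => -g x)
      (φ := fun _ => (0:ℝ)) (g' := fun x => -g' x)
      hpq hcont.neg (fun x hx => (hder x hx).neg) ((integrable_zero _ _ _).integrableOn)
      (fun x hx => by simpa using hnn x hx)
  simp only [intervalIntegral.integral_zero] at h
  linarith

lemma nonneg_persist_s1 {w W : ℝ → ℝ}
    (hw : ContinuousOn w (Set.Ici 0))
    (hder : ∀ x, 0 < x → HasDerivWithinAt w (W x) (Set.Ioi x) x)
    (h0 : 0 ≤ w 0)
    (hW : ∀ x, 0 < x → w x < 0 → 0 ≤ W x) :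
    ∀ t, 0 ≤ t → 0 ≤ w t := by
  intro t ht
  by_contra hlt; push_neg at hlt
  set Z := {s : ℝ | s ∈ Set.Icc 0 t ∧ 0 ≤ w s} with hZdef
  have hZne : Z.Nonempty := ⟨0, ⟨le_refl 0, ht⟩, h0⟩
  have hZclosed : IsClosed Z := by
    have : Z = Set.Icc 0 t ∩ w ⁻¹' (Set.Ici 0) := by
      ext x; simp [hZdef, and_comm]
    rw [this]
    exact (hw.mono (fun x hx => hx.1)).preimage_isClosed_of_isClosed isClosed_Icc isClosed_Ici
  have hZbdd : BddAbove Z := ⟨t, fun s hs => hs.1.2⟩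
  set p := sSup Z with hpdef
  have hpZ : p ∈ Z := hZclosed.csSup_mem hZne hZbdd
  have hpt : p < t := lt_of_le_of_ne hpZ.1.2 (fun h => absurd (h ▸ hpZ.2) (not_le.2 hlt))
  have hneg : ∀ s, p < s → s ≤ t → w s < 0 := by
    intro s hps hst
    by_contra h; push_neg at h
    exact absurd (le_csSup hZbdd ⟨⟨le_trans hpZ.1.1 hps.le, hst⟩, h⟩) (not_le.2 hps)
  have hmono := monotone_of_right_deriv_nonneg hpt.le
      (hw.mono (fun x hx => le_trans hpZ.1.1 hx.1))
      (fun x hx => hder x (lt_of_le_of_lt hpZ.1.1 hx.1))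
      (fun x hx => hW x (lt_of_le_of_lt hpZ.1.1 hx.1) (hneg x hx.1 hx.2.le))
  linarith [hpZ.2]


set_option maxHeartbeats 1000000 in
/-- if `λ > 0` then the time-averages of `I` are ultimately
bounded below by `c_min·λ/((a_max·N + c_max)·a_max) > 0`; in particular
`limsup_{t→∞} I(t)` is at least this positive constant. -/
theorem sirs_average_infectives_lower_bound
    (N : ℝ) (hN : 0 < N) (a b c : Env → ℝ)
    (ha : ∀ σ, 0 < a σ) (hb : ∀ σ, 0 < b σ) (hc : ∀ σ, 0 < c σ)
    (ξ : ℝ → Env) (hξ : IsSwitchingSignal ξ)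
    (lam : ℝ) (hlam : 0 < lam) (hmean : HasMeanGrowthRate N a b ξ lam)
    (S I : ℝ → ℝ) (hsol : IsSIRSSolution N a b c ξ S I)
    (hS0 : 0 < S 0) (hI0 : 0 < I 0) (hsum : S 0 + I 0 ≤ N)
    (ρ : ℝ)
    (hρ : ρ = min (c true) (c false) * lam /
      ((max (a true) (a false) * N + max (c true) (c false)) * max (a true) (a false))) :
    0 < ρ ∧
    ρ ≤ Filter.liminf (fun t : ℝ => (1 / t) * ∫ s in (0:ℝ)..t, I s) Filter.atTop ∧
    ρ ≤ Filter.limsup I Filter.atTop := by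
  obtain ⟨hScont, hIcont, hode⟩ := hsol
  set amax := max (a true) (a false) with hamaxdef
  set cmax := max (c true) (c false) with hcmaxdef
  set cmin := min (c true) (c false) with hcmindef
  set bmax := max (b true) (b false) with hbmaxdef
  have haσ : ∀ σ, a σ ≤ amax := fun σ => by
    cases σ
    · exact le_max_right _ _
    · exact le_max_left _ _
  have hbσ : ∀ σ, b σ ≤ bmax := fun σ => by
    cases σ
    · exact le_max_right _ _
    · exact le_max_left _ _
  have hcσ : ∀ σ, c σ ≤ cmax := fun σ => by
    cases σ
    · exact le_max_right _ _
    · exact le_max_left _ _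
  have hcσ' : ∀ σ, cmin ≤ c σ := fun σ => by
    cases σ
    · exact min_le_right _ _
    · exact min_le_left _ _
  have hamax : 0 < amax := lt_of_lt_of_le (ha true) (haσ true)
  have hbmax : 0 < bmax := lt_of_lt_of_le (hb true) (hbσ true)
  have hcmax : 0 < cmax := lt_of_lt_of_le (hc true) (hcσ true)
  have hcmin : 0 < cmin := lt_min (hc true) (hc false)
  -- right derivatives everywhere on (0, ∞)
  have hSder : ∀ t, 0 < t → HasDerivWithinAt S
      (-(a (ξ t) * S t * I t) + c (ξ t) * (N - S t - I t)) (Set.Ioi t) t := by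
    intro t ht
    exact right_deriv_of_switching ξ hξ S
      (fun σ s => -(a σ * S s * I s) + c σ * (N - S s - I s)) hScont
      (fun σ => (((continuousOn_const.mul hScont).mul hIcont).neg).add
        (continuousOn_const.mul ((continuousOn_const.sub hScont).sub hIcont)))
      (fun s hs hc' => (hode s hs hc').1) t ht
  have hIder : ∀ t, 0 < t → HasDerivWithinAt I
      (a (ξ t) * S t * I t - b (ξ t) * I t) (Set.Ioi t) t := by
    intro t ht
    exact right_deriv_of_switching ξ hξ I
      (fun σ s => a σ * S s * I s - b σ * I s) hIcont
      (fun σ => ((continuousOn_const.mul hScont).mul hIcont).sub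
        (continuousOn_const.mul hIcont))
      (fun s hs hc' => (hode s hs hc').2) t ht
  -- Step A : I is positive
  have hIpos : ∀ t, 0 ≤ t → 0 < I t := by
    intro t ht
    by_contra hle; push_neg at hle
    have ht0 : 0 < t := by
      rcases lt_or_eq_of_le ht with h | h
      · exact h
      · exact absurd (h ▸ hI0) (not_lt.2 hle)
    set Z := {s : ℝ | s ∈ Set.Icc 0 t ∧ I s ≤ 0} with hZdef
    have hZne : Z.Nonempty := ⟨t, ⟨ht, le_refl t⟩, hle⟩
    have hZclosed : IsClosed Z := by
      have : Z = Set.Icc 0 t ∩ I ⁻¹' (Set.Iic 0) := by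
        ext x; simp [hZdef, and_comm]
      rw [this]
      exact (hIcont.mono (fun x hx => hx.1)).preimage_isClosed_of_isClosed isClosed_Icc isClosed_Iic
    have hZbdd : BddBelow Z := ⟨0, fun s hs => hs.1.1⟩
    set p := sInf Z with hpdef
    have hpZ : p ∈ Z := hZclosed.csInf_mem hZne hZbdd
    have hp0 : 0 < p := by
      rcases lt_or_eq_of_le hpZ.1.1 with h | h
      · exact h
      · exact absurd (h ▸ hI0) (not_lt.2 hpZ.2)
    have hIpos' : ∀ s, 0 ≤ s → s < p → 0 < I s := by
      intro s hs hsp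
      by_contra h; push_neg at h
      exact absurd (csInf_le hZbdd ⟨⟨hs, le_trans hsp.le hpZ.1.2⟩, h⟩) (not_le.2 hsp)
    obtain ⟨Cs, hCs⟩ := isCompact_Icc.exists_bound_of_continuousOn
      (hScont.mono (fun x (hx : x ∈ Set.Icc 0 p) => hx.1))
    set L := amax * Cs + bmax with hLdef
    have hL : 0 ≤ L := by
      have := hCs 0 ⟨le_refl 0, hp0.le⟩
      have h0 : 0 ≤ Cs := le_trans (norm_nonneg _) this
      positivity
    have hgder : ∀ x ∈ Set.Ioo 0 p, HasDerivWithinAt (fun s => Real.exp (L * s) * I s)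
        (Real.exp (L * x) * L * I x +
          Real.exp (L * x) * (a (ξ x) * S x * I x - b (ξ x) * I x)) (Set.Ioi x) x := by
      intro x hx
      have he : HasDerivAt (fun s : ℝ => Real.exp (L * s)) (Real.exp (L * x) * L) x := by
        have := HasDerivAt.exp ((hasDerivAt_id x).const_mul L)
        simpa using this
      exact (he.hasDerivWithinAt).mul (hIder x hx.1)
    have hgcont : ContinuousOn (fun s => Real.exp (L * s) * I s) (Set.Icc 0 p) :=
      ((Real.continuous_exp.comp (continuous_const.mul continuous_id)).continuousOn).mul
        (hIcont.mono (fun x hx => hx.1))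
    have hmono := monotone_of_right_deriv_nonneg hp0.le hgcont hgder ?_
    · have h1 : Real.exp (L * 0) * I 0 = I 0 := by simp
      have h2 : Real.exp (L * p) * I p ≤ 0 :=
        mul_nonpos_iff.2 (Or.inl ⟨(Real.exp_pos _).le, hpZ.2⟩)
      rw [h1] at hmono; linarith
    · intro x hx
      have hIx : 0 < I x := hIpos' x hx.1.le hx.2
      have hSx : |S x| ≤ Cs := hCs x ⟨hx.1.le, le_trans hx.2.le le_rfl⟩
      have haS : -(amax * Cs) ≤ a (ξ x) * S x := by
        have h1 : a (ξ x) * S x ≥ -(a (ξ x) * |S x|) := by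
          have := neg_abs_le (S x)
          nlinarith [ha (ξ x), abs_nonneg (S x)]
        have h2 : a (ξ x) * |S x| ≤ amax * Cs := by
          have := haσ (ξ x)
          nlinarith [ha (ξ x), abs_nonneg (S x)]
        linarith
      have key : 0 ≤ L + (a (ξ x) * S x - b (ξ x)) := by
        have := hbσ (ξ x); simp only [hLdef]; linarith
      have hexp : 0 < Real.exp (L * x) := Real.exp_pos _
      have : Real.exp (L * x) * L * I x +
          Real.exp (L * x) * (a (ξ x) * S x * I x - b (ξ x) * I x)
          = Real.exp (L * x) * I x * (L + (a (ξ x) * S x - b (ξ x))) := by ring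
      rw [this]
      positivity
  -- Step B : N - S - I ≥ 0
  have hucont : ContinuousOn (fun s => N - S s - I s) (Set.Ici 0) :=
    (continuousOn_const.sub hScont).sub hIcont
  have huder : ∀ x, 0 < x → HasDerivWithinAt (fun s => N - S s - I s)
      (b (ξ x) * I x - c (ξ x) * (N - S x - I x)) (Set.Ioi x) x := by
    intro x hx
    have h := ((hasDerivWithinAt_const x (Set.Ioi x) N).sub (hSder x hx)).sub (hIder x hx)
    rw [show b (ξ x) * I x - c (ξ x) * (N - S x - I x) = 0 - (-(a (ξ x) * S x * I x) + c (ξ x) * (N - S x - I x)) - (a (ξ x) * S x * I x - b (ξ x) * I x) by ring]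
    exact h
  have hunn : ∀ t, 0 ≤ t → 0 ≤ N - S t - I t := by
    apply nonneg_persist_s1 hucont huder (by linarith)
    intro x hx hneg
    have hI := hIpos x hx.le
    have hbp := hb (ξ x)
    have hcp := hc (ξ x)
    nlinarith [mul_pos hbp hI, mul_pos hcp (neg_pos.2 hneg)]
  -- Step C : S ≥ 0
  have hSnn : ∀ t, 0 ≤ t → 0 ≤ S t := by
    apply nonneg_persist_s1 hScont (fun x hx => hSder x hx) hS0.le
    intro x hx hneg
    have hI := hIpos x hx.le
    have hu := hunn x hx.le
    have hap := ha (ξ x)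
    have hcp := hc (ξ x)
    nlinarith [mul_pos (mul_pos hap hI) (neg_pos.2 hneg), mul_nonneg hcp.le hu]
  have hSleN : ∀ t, 0 ≤ t → S t ≤ N := by
    intro t ht
    have := hunn t ht; have := hIpos t ht; linarith
  have hIleN : ∀ t, 0 ≤ t → I t ≤ N := by
    intro t ht
    have := hunn t ht; have := hSnn t ht; linarith
  -- interval integrability machinery
  have hScIcc : ∀ t : ℝ, ContinuousOn S (Set.Icc 0 t) := fun t => hScont.mono (fun x hx => hx.1)
  have hIcIcc : ∀ t : ℝ, ContinuousOn I (Set.Icc 0 t) := fun t => hIcont.mono (fun x hx => hx.1)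
  have hii : ∀ (t : ℝ), 0 ≤ t → ∀ (K : Env → ℝ → ℝ), (∀ σ, ContinuousOn (K σ) (Set.Icc 0 t)) →
      IntervalIntegrable (fun s => K (ξ s) s) volume 0 t := by
    intro t ht K hK
    have h := integrableOn_switch ξ hξ t K hK
    rw [← Set.uIcc_of_le ht] at h
    exact h.intervalIntegrable
  have hftc : ∀ (t : ℝ), 0 < t → ∀ (f : ℝ → ℝ) (K : Env → ℝ → ℝ),
      ContinuousOn f (Set.Icc 0 t) → (∀ σ, ContinuousOn (K σ) (Set.Icc 0 t)) →
      (∀ x ∈ Set.Ioo (0:ℝ) t, HasDerivWithinAt f (K (ξ x) x) (Set.Ioi x) x) →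
      ∫ s in (0:ℝ)..t, K (ξ s) s = f t - f 0 := by
    intro t ht f K hfc hKc hder
    exact intervalIntegral.integral_eq_sub_of_hasDeriv_right_of_le ht.le hfc hder
      (hii t ht.le K hKc)
  have hlogid : ∀ t, 0 < t →
      ∫ s in (0:ℝ)..t, (a (ξ s) * S s - b (ξ s)) = Real.log (I t) - Real.log (I 0) := by
    intro t ht
    refine hftc t ht (fun s => Real.log (I s)) (fun σ s => a σ * S s - b σ) ?_ ?_ ?_
    · exact ContinuousOn.log (hIcIcc t) (fun s hs => (hIpos s hs.1).ne')
    · intro σ; exact (continuousOn_const.mul (hScIcc t)).sub continuousOn_const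
    · intro x hx
      have hne : I x ≠ 0 := (hIpos x hx.1.le).ne'
      have h := (hIder x hx.1).log hne
      convert h using 1
      field_simp
  have hSid : ∀ t, 0 < t →
      ∫ s in (0:ℝ)..t, (-(a (ξ s) * S s * I s) + c (ξ s) * (N - S s - I s)) = S t - S 0 := by
    intro t ht
    refine hftc t ht S (fun σ s => -(a σ * S s * I s) + c σ * (N - S s - I s)) (hScIcc t) ?_ ?_
    · intro σ
      exact (((continuousOn_const.mul (hScIcc t)).mul (hIcIcc t)).neg).add
        (continuousOn_const.mul ((continuousOn_const.sub (hScIcc t)).sub (hIcIcc t)))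
    · intro x hx; exact hSder x hx.1
  -- main chain of integral inequalities
  set K0 := Real.log N - Real.log (I 0) + amax * N / cmin with hK0def
  set C0 := amax * (amax * N + cmax) / cmin with hC0def
  have hANc : 0 < amax * N + cmax := by nlinarith
  have hC0pos : 0 < C0 := div_pos (mul_pos hamax hANc) hcmin
  have hchain : ∀ t, 0 < t → (∫ s in (0:ℝ)..t, (a (ξ s) * N - b (ξ s))) ≤
      K0 + C0 * ∫ s in (0:ℝ)..t, I s := by
    intro t ht
    have i2 : IntervalIntegrable (fun s => a (ξ s) * S s - b (ξ s)) volume 0 t :=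
      hii t ht.le (fun σ s => a σ * S s - b σ)
        (fun σ => (continuousOn_const.mul (hScIcc t)).sub continuousOn_const)
    have i3 : IntervalIntegrable (fun s => a (ξ s) * (N - S s)) volume 0 t :=
      hii t ht.le (fun σ s => a σ * (N - S s))
        (fun σ => continuousOn_const.mul (continuousOn_const.sub (hScIcc t)))
    have i3' : IntervalIntegrable (fun s => amax * (N - S s)) volume 0 t :=
      hii t ht.le (fun _ s => amax * (N - S s))
        (fun σ => continuousOn_const.mul (continuousOn_const.sub (hScIcc t)))
    have i4 : IntervalIntegrable (fun s => c (ξ s) * (N - S s)) volume 0 t :=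
      hii t ht.le (fun σ s => c σ * (N - S s))
        (fun σ => continuousOn_const.mul (continuousOn_const.sub (hScIcc t)))
    have i4' : IntervalIntegrable (fun s => cmin * (N - S s)) volume 0 t :=
      hii t ht.le (fun _ s => cmin * (N - S s))
        (fun σ => continuousOn_const.mul (continuousOn_const.sub (hScIcc t)))
    have i5 : IntervalIntegrable
        (fun s => -(a (ξ s) * S s * I s) + c (ξ s) * (N - S s - I s)) volume 0 t :=
      hii t ht.le (fun σ s => -(a σ * S s * I s) + c σ * (N - S s - I s))
        (fun σ => (((continuousOn_const.mul (hScIcc t)).mul (hIcIcc t)).neg).add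
          (continuousOn_const.mul ((continuousOn_const.sub (hScIcc t)).sub (hIcIcc t))))
    have i5' : IntervalIntegrable (fun s => a (ξ s) * S s * I s) volume 0 t :=
      hii t ht.le (fun σ s => a σ * S s * I s)
        (fun σ => (continuousOn_const.mul (hScIcc t)).mul (hIcIcc t))
    have i6 : IntervalIntegrable (fun s => c (ξ s) * I s) volume 0 t :=
      hii t ht.le (fun σ s => c σ * I s) (fun σ => continuousOn_const.mul (hIcIcc t))
    have iI : IntervalIntegrable I volume 0 t :=
      hii t ht.le (fun _ s => I s) (fun σ => hIcIcc t)
    have i6' : IntervalIntegrable (fun s => amax * N * I s) volume 0 t :=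
      hii t ht.le (fun _ s => amax * N * I s) (fun σ => continuousOn_const.mul (hIcIcc t))
    have i7' : IntervalIntegrable (fun s => cmax * I s) volume 0 t :=
      hii t ht.le (fun _ s => cmax * I s) (fun σ => continuousOn_const.mul (hIcIcc t))
    have e1 : (∫ s in (0:ℝ)..t, (a (ξ s) * N - b (ξ s))) =
        (∫ s in (0:ℝ)..t, (a (ξ s) * S s - b (ξ s))) +
          ∫ s in (0:ℝ)..t, a (ξ s) * (N - S s) := by
      rw [← intervalIntegral.integral_add i2 i3]
      exact intervalIntegral.integral_congr (fun s _ => by ring)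
    have e2 : (∫ s in (0:ℝ)..t, (a (ξ s) * S s - b (ξ s))) ≤ Real.log N - Real.log (I 0) := by
      rw [hlogid t ht]
      have h := Real.log_le_log (hIpos t ht.le) (hIleN t ht.le)
      linarith
    have e3 : (∫ s in (0:ℝ)..t, a (ξ s) * (N - S s)) ≤
        amax * ∫ s in (0:ℝ)..t, (N - S s) := by
      rw [← intervalIntegral.integral_const_mul]
      apply intervalIntegral.integral_mono_on ht.le i3 i3'
      intro x hx
      have h1 : 0 ≤ N - S x := by linarith [hSleN x hx.1]
      exact mul_le_mul_of_nonneg_right (haσ _) h1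
    have e4 : cmin * (∫ s in (0:ℝ)..t, (N - S s)) ≤
        ∫ s in (0:ℝ)..t, c (ξ s) * (N - S s) := by
      rw [← intervalIntegral.integral_const_mul]
      apply intervalIntegral.integral_mono_on ht.le i4' i4
      intro x hx
      have h1 : 0 ≤ N - S x := by linarith [hSleN x hx.1]
      exact mul_le_mul_of_nonneg_right (hcσ' _) h1
    have e5 : (∫ s in (0:ℝ)..t, c (ξ s) * (N - S s)) = (S t - S 0) +
        ((∫ s in (0:ℝ)..t, a (ξ s) * S s * I s) + ∫ s in (0:ℝ)..t, c (ξ s) * I s) := by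
      rw [← hSid t ht, ← intervalIntegral.integral_add i5' i6,
        ← intervalIntegral.integral_add i5 (i5'.add i6)]
      exact intervalIntegral.integral_congr (fun s _ => by ring)
    have e6 : (∫ s in (0:ℝ)..t, a (ξ s) * S s * I s) ≤
        amax * N * ∫ s in (0:ℝ)..t, I s := by
      rw [← intervalIntegral.integral_const_mul]
      apply intervalIntegral.integral_mono_on ht.le i5' i6'
      intro x hx
      have h1 := hIpos x hx.1
      have h2 := hSnn x hx.1
      have h3 := hSleN x hx.1
      have h4 := haσ (ξ x)
      have h5 := ha (ξ x)
      have h6 : a (ξ x) * S x ≤ amax * N := mul_le_mul h4 h3 h2 hamax.le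
      exact mul_le_mul_of_nonneg_right h6 h1.le
    have e7 : (∫ s in (0:ℝ)..t, c (ξ s) * I s) ≤ cmax * ∫ s in (0:ℝ)..t, I s := by
      rw [← intervalIntegral.integral_const_mul]
      apply intervalIntegral.integral_mono_on ht.le i6 i7'
      intro x hx
      exact mul_le_mul_of_nonneg_right (hcσ _) (hIpos x hx.1).le
    have e8 : S t - S 0 ≤ N := by
      have := hSleN t ht.le; linarith
    set X := ∫ s in (0:ℝ)..t, (N - S s) with hX
    set JI := ∫ s in (0:ℝ)..t, I s with hJI
    have h10 : cmin * X ≤ N + (amax * N + cmax) * JI := by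
      have hdist : (amax * N + cmax) * JI = amax * N * JI + cmax * JI := by ring
      linarith [e4, e5, e6, e7, e8, hdist]
    have h11 : (∫ s in (0:ℝ)..t, (a (ξ s) * N - b (ξ s))) ≤
        (Real.log N - Real.log (I 0)) + amax * X := by linarith [e1, e2, e3]
    have h12 : amax * (cmin * X) ≤ amax * (N + (amax * N + cmax) * JI) :=
      mul_le_mul_of_nonneg_left h10 hamax.le
    have h13 : K0 + C0 * JI = (Real.log N - Real.log (I 0)) +
        (amax * (N + (amax * N + cmax) * JI)) / cmin := by
      rw [hK0def, hC0def]; field_simp; ring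
    rw [h13]
    have h14 : amax * X ≤ amax * (N + (amax * N + cmax) * JI) / cmin := by
      rw [le_div_iff₀ hcmin]
      have hr : amax * X * cmin = amax * (cmin * X) := by ring
      linarith [h12, hr]
    linarith
  -- positivity of ρ
  have hρpos : 0 < ρ := by
    rw [hρ]
    exact div_pos (mul_pos hcmin hlam) (mul_pos hANc hamax)
  -- nonnegativity / boundedness of averages
  have hAnn : ∀ᶠ t in atTop, 0 ≤ (1 / t) * ∫ s in (0:ℝ)..t, I s := by
    filter_upwards [eventually_gt_atTop (0:ℝ)] with t ht
    have e9 : 0 ≤ ∫ s in (0:ℝ)..t, I s :=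
      intervalIntegral.integral_nonneg ht.le (fun x hx => (hIpos x hx.1).le)
    have h1 : (0:ℝ) ≤ 1 / t := by positivity
    exact mul_nonneg h1 e9
  have hAleN : ∀ᶠ t in atTop, (1 / t) * (∫ s in (0:ℝ)..t, I s) ≤ N := by
    filter_upwards [eventually_gt_atTop (0:ℝ)] with t ht
    have iI : IntervalIntegrable I volume 0 t :=
      hii t ht.le (fun _ s => I s) (fun σ => hIcIcc t)
    have h1 : (∫ s in (0:ℝ)..t, I s) ≤ ∫ _ in (0:ℝ)..t, N := by
      apply intervalIntegral.integral_mono_on ht.le iI intervalIntegrable_const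
      intro x hx; exact hIleN x hx.1
    rw [intervalIntegral.integral_const, smul_eq_mul] at h1
    have h2 : (1 / t) * (∫ s in (0:ℝ)..t, I s) ≤ (1 / t) * ((t - 0) * N) :=
      mul_le_mul_of_nonneg_left h1 (by positivity)
    have h3 : (1 / t) * ((t - 0) * N) = N := by field_simp; ring
    linarith
  -- liminf lower bound
  have hliminf : ρ ≤ liminf (fun t : ℝ => (1 / t) * ∫ s in (0:ℝ)..t, I s) atTop := by
    set ψ := fun t : ℝ =>
      ((1 / t) * (∫ s in (0:ℝ)..t, (a (ξ s) * N - b (ξ s))) - K0 / t) / C0 with hψdef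
    have hψlim : Tendsto ψ atTop (nhds ρ) := by
      have h1 : Tendsto (fun t : ℝ => K0 / t) atTop (nhds 0) :=
        tendsto_const_nhds.div_atTop tendsto_id
      have h2 := (hmean.sub h1).div_const C0
      have hρC : ρ = (lam - 0) / C0 := by
        rw [hρ, hC0def]
        rw [div_div_eq_mul_div, sub_zero]
        rw [div_eq_div_iff (mul_pos hANc hamax).ne' (by positivity : amax * (amax * N + cmax) ≠ 0)]
        ring
      rw [hρC]; exact h2
    have hψle : ∀ᶠ t in atTop, ψ t ≤ (1 / t) * ∫ s in (0:ℝ)..t, I s := by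
      filter_upwards [eventually_gt_atTop (0:ℝ)] with t ht
      have h := hchain t ht
      have hpos : (0:ℝ) < 1 / t := by positivity
      have h2 := mul_le_mul_of_nonneg_left h hpos.le
      rw [hψdef]
      rw [div_le_iff₀ hC0pos]
      have hd : (1 / t) * (K0 + C0 * (∫ s in (0:ℝ)..t, I s)) =
          K0 / t + (1 / t * ∫ s in (0:ℝ)..t, I s) * C0 := by ring
      linarith [h2, hd]
    have hψbd : IsBoundedUnder (· ≥ ·) atTop ψ := hψlim.isBoundedUnder_ge
    have hAcb' : IsCoboundedUnder (· ≥ ·) atTop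
        (fun t : ℝ => (1 / t) * ∫ s in (0:ℝ)..t, I s) :=
      isCoboundedUnder_ge_of_eventually_le atTop hAleN
    calc ρ = liminf ψ atTop := hψlim.liminf_eq.symm
      _ ≤ _ := liminf_le_liminf hψle hψbd hAcb'
  refine ⟨hρpos, hliminf, ?_⟩
  -- limsup lower bound
  by_contra hcon; push_neg at hcon
  have hbddI : IsBoundedUnder (· ≤ ·) atTop I :=
    isBoundedUnder_of_eventually_le (a := N)
      (by filter_upwards [eventually_ge_atTop (0:ℝ)] with t ht; exact hIleN t ht)
  set m := limsup I atTop with hm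
  set b' := max ((m + ρ) / 2) 0 with hb'
  have hb'ρ : b' < ρ := max_lt (by linarith) hρpos
  have hb'0 : (0:ℝ) ≤ b' := le_max_right _ _
  have hev : ∀ᶠ t in atTop, I t ≤ b' := by
    have h := eventually_lt_of_limsup_lt
      (show limsup I atTop < (m + ρ) / 2 by rw [← hm]; linarith) hbddI
    filter_upwards [h] with t ht'
    exact le_trans ht'.le (le_max_left _ _)
  obtain ⟨t₀, ht₀⟩ := eventually_atTop.1 hev
  set t₁ := max t₀ 0 with ht₁def
  have h0t₁ : (0:ℝ) ≤ t₁ := le_max_right _ _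
  set D := ∫ s in (0:ℝ)..t₁, I s with hD
  have hfn : ∀ᶠ t in atTop, (1 / t) * (∫ s in (0:ℝ)..t, I s) ≤ D / t + b' := by
    filter_upwards [eventually_ge_atTop (t₁ + 1)] with t htt
    have ht : (0:ℝ) < t := by linarith
    have ht₁t : t₁ ≤ t := by linarith
    have hint1 : IntervalIntegrable I volume 0 t₁ :=
      hii t₁ h0t₁ (fun _ s => I s) (fun σ => hIcIcc t₁)
    have hintt : IntervalIntegrable I volume 0 t :=
      hii t ht.le (fun _ s => I s) (fun σ => hIcIcc t)
    have hint2 : IntervalIntegrable I volume t₁ t := by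
      apply hintt.mono_set
      rw [Set.uIcc_of_le ht.le, Set.uIcc_of_le ht₁t]
      exact Set.Icc_subset_Icc h0t₁ le_rfl
    have hsplit : (∫ s in (0:ℝ)..t, I s) = D + ∫ s in t₁..t, I s := by
      rw [hD]; exact (intervalIntegral.integral_add_adjacent_intervals hint1 hint2).symm
    have hm2 : (∫ s in t₁..t, I s) ≤ (t - t₁) * b' := by
      have h := intervalIntegral.integral_mono_on ht₁t hint2 intervalIntegrable_const
        (fun x hx => ht₀ x (le_trans (le_max_left _ _) hx.1))
      rwa [intervalIntegral.integral_const, smul_eq_mul] at h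
    have hpos : (0:ℝ) < 1 / t := by positivity
    have h5 := mul_le_mul_of_nonneg_left
      (show (∫ s in (0:ℝ)..t, I s) ≤ D + (t - t₁) * b' by linarith [hm2, hsplit]) hpos.le
    have h4 : (t - t₁) * b' ≤ t * b' := by nlinarith
    have h3 : (1 / t) * (D + (t - t₁) * b') ≤ (1 / t) * (D + t * b') :=
      mul_le_mul_of_nonneg_left (by linarith) hpos.le
    have h6 : (1 / t) * (D + t * b') = D / t + b' := by field_simp
    linarith
  have hfnlim : Tendsto (fun t : ℝ => D / t + b') atTop (nhds b') := by
    have h1 : Tendsto (fun t : ℝ => D / t) atTop (nhds 0) :=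
      tendsto_const_nhds.div_atTop tendsto_id
    have h2 := h1.add (tendsto_const_nhds (x := b') (f := atTop))
    simpa using h2
  have hAbd : IsBoundedUnder (· ≥ ·) atTop
      (fun t : ℝ => (1 / t) * ∫ s in (0:ℝ)..t, I s) :=
    isBoundedUnder_of_eventually_ge hAnn
  have hfncb : IsCoboundedUnder (· ≥ ·) atTop (fun t : ℝ => D / t + b') :=
    hfnlim.isCoboundedUnder_ge
  have hcontr : liminf (fun t : ℝ => (1 / t) * ∫ s in (0:ℝ)..t, I s) atTop ≤ b' := by
    calc liminf (fun t : ℝ => (1 / t) * ∫ s in (0:ℝ)..t, I s) atTop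
        ≤ liminf (fun t : ℝ => D / t + b') atTop := liminf_le_liminf hfn hAbd hfncb
      _ = b' := hfnlim.liminf_eq
  linarith
end

section
/- Suppose the switching signal ξ has mean growth rate λ ∈ ℝ, and let (S, I) be a solution of the switched SIRS system with S(0) > 0, I(0) > 0 and S(0) + I(0) ≤ N. Then limsup_{t→∞} (log I(t))/t ≤ λ. -/
open Filter MeasureTheory

/-- If `f` is continuous on `[a,x]` and has nonpositive right derivative at every point of
`[a,x)` outside a finite set `E`, then `f x ≤ f a`. -/
lemma aux_right_deriv_le {E : Set ℝ} (hE : E.Finite) :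
    ∀ a x : ℝ, ∀ f g : ℝ → ℝ, ContinuousOn f (Set.Icc a x) →
      (∀ y, y ∈ Set.Ico a x → y ∉ E → HasDerivWithinAt f (g y) (Set.Ici y) y) →
      (∀ y, y ∈ Set.Ico a x → y ∉ E → g y ≤ 0) →
      a ≤ x → f x ≤ f a := by
  refine Set.Finite.induction_on (motive := fun E _ => ∀ a x : ℝ, ∀ f g : ℝ → ℝ,
      ContinuousOn f (Set.Icc a x) →
      (∀ y, y ∈ Set.Ico a x → y ∉ E → HasDerivWithinAt f (g y) (Set.Ici y) y) →
      (∀ y, y ∈ Set.Ico a x → y ∉ E → g y ≤ 0) → a ≤ x → f x ≤ f a) E hE ?_ ?_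
  · intro a x f g hcont hderiv hle hax
    exact image_le_of_deriv_right_le_deriv_boundary (B := fun _ => f a) (B' := fun _ => 0) hcont
      (fun y hy => hderiv y hy (Set.notMem_empty y)) le_rfl continuousOn_const
      (fun y _ => hasDerivWithinAt_const y _ (f a))
      (fun y hy => hle y hy (Set.notMem_empty y)) (Set.right_mem_Icc.2 hax)
  · rintro e E' - - IH a x f g hcont hderiv hle hax
    by_cases he : e ∈ Set.Ico a x
    · have h1 : f e ≤ f a := by
        refine IH a e f g (hcont.mono (Set.Icc_subset_Icc_right he.2.le))
          (fun y hy hyE => hderiv y ⟨hy.1, hy.2.trans he.2⟩ ?_)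
          (fun y hy hyE => hle y ⟨hy.1, hy.2.trans he.2⟩ ?_) he.1 <;>
        · simp only [Set.mem_insert_iff, not_or]
          exact ⟨ne_of_lt hy.2, hyE⟩
      have h2 : ∀ cc ∈ Set.Ioc e x, f x ≤ f cc := by
        intro cc hcc
        refine IH cc x f g (hcont.mono (Set.Icc_subset_Icc_left (he.1.trans hcc.1.le)))
          (fun y hy hyE => hderiv y ⟨(he.1.trans hcc.1.le).trans hy.1, hy.2⟩ ?_)
          (fun y hy hyE => hle y ⟨(he.1.trans hcc.1.le).trans hy.1, hy.2⟩ ?_) hcc.2 <;>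
        · simp only [Set.mem_insert_iff, not_or]
          exact ⟨(hcc.1.trans_le hy.1).ne', hyE⟩
      have hcw : ContinuousWithinAt f (Set.Ioc e x) e :=
        (hcont.continuousWithinAt ⟨he.1, he.2.le⟩).mono
          (fun z hz => ⟨he.1.trans hz.1.le, hz.2⟩)
      haveI hne : (nhdsWithin e (Set.Ioc e x)).NeBot := by
        rw [nhdsWithin_Ioc_eq_nhdsGT he.2]
        exact nhdsGT_neBot e
      have h3 : f x ≤ f e :=
        ge_of_tendsto hcw (eventually_mem_nhdsWithin.mono fun cc hcc => h2 cc hcc)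
      exact h3.trans h1
    · refine IH a x f g hcont
        (fun y hy hyE => hderiv y hy ?_) (fun y hy hyE => hle y hy ?_) hax <;>
      · simp only [Set.mem_insert_iff, not_or]
        exact ⟨fun h => he (h ▸ hy), hyE⟩

lemma aux_right_deriv_eq {E : Set ℝ} (hE : E.Finite) {a x : ℝ} {f : ℝ → ℝ}
    (hcont : ContinuousOn f (Set.Icc a x))
    (hderiv : ∀ y, y ∈ Set.Ico a x → y ∉ E → HasDerivWithinAt f 0 (Set.Ici y) y)
    (hax : a ≤ x) : f x = f a := by
  refine le_antisymm
    (aux_right_deriv_le hE a x f (fun _ => 0) hcont hderiv (fun _ _ _ => le_rfl) hax) ?_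
  have h := aux_right_deriv_le hE a x (fun t => -f t) (fun _ => 0) hcont.neg
    (fun y hy hyE => by have h := (hderiv y hy hyE).neg; rw [neg_zero] at h; exact h) (fun _ _ _ => le_rfl) hax
  simpa using h

set_option maxHeartbeats 1600000 in
/-- `limsup_{t→∞} (log I(t))/t ≤ λ`. -/
theorem sirs_log_infectives_limsup
    (N : ℝ) (hN : 0 < N) (a b c : Env → ℝ)
    (ha : ∀ σ, 0 < a σ) (hb : ∀ σ, 0 < b σ) (hc : ∀ σ, 0 < c σ)
    (ξ : ℝ → Env) (hξ : IsSwitchingSignal ξ)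
    (lam : ℝ) (hmean : HasMeanGrowthRate N a b ξ lam)
    (S I : ℝ → ℝ) (hsol : IsSIRSSolution N a b c ξ S I)
    (hS0 : 0 < S 0) (hI0 : 0 < I 0) (hsum : S 0 + I 0 ≤ N) :
    Filter.limsup (fun t : ℝ => ((Real.log (I t) / t : ℝ) : EReal)) Filter.atTop
      ≤ (lam : EReal) := by
  obtain ⟨hScont, hIcont, hode⟩ := hsol
  -- the set of discontinuities is countable
  have hDc : {t : ℝ | 0 ≤ t ∧ ¬ ContPt ξ t}.Countable := by
    have hsub : {t : ℝ | 0 ≤ t ∧ ¬ ContPt ξ t} ⊆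
        ⋃ n : ℕ, {t : ℝ | 0 ≤ t ∧ t ≤ n ∧ ¬ ContPt ξ t} := fun t ht =>
      Set.mem_iUnion.2 ⟨⌈t⌉₊, ht.1, Nat.le_ceil t, ht.2⟩
    exact Set.Countable.mono hsub (Set.countable_iUnion fun n : ℕ => (hξ.2 n).countable)
  have hrestr : volume.restrict (Set.Ici (0:ℝ)) =
      volume.restrict (Set.Ici 0 \ {t : ℝ | 0 ≤ t ∧ ¬ ContPt ξ t}) := by
    refine Measure.restrict_congr_set (ae_eq_set.2 ⟨?_, ?_⟩)
    · exact measure_mono_null (fun t ht => by_contra fun h => ht.2 ⟨ht.1, h⟩)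
        (hDc.measure_zero _)
    · rw [Set.diff_eq_empty.2 Set.diff_subset]
      exact measure_empty
  -- ae-measurability of functions of ξ on [0,∞)
  have hxiA : ∀ φ : Env → ℝ,
      AEMeasurable (fun s => φ (ξ s)) (volume.restrict (Set.Ici (0:ℝ))) := by
    intro φ
    rw [hrestr]
    refine ContinuousOn.aemeasurable ?_ (measurableSet_Ici.diff hDc.measurableSet)
    intro t ht
    have hcp : ContPt ξ t := not_not.1 fun h => ht.2 ⟨ht.1, h⟩
    have hev : (fun s => φ (ξ s)) =ᶠ[nhdsWithin t (Set.Ici 0 \ {t : ℝ | 0 ≤ t ∧ ¬ ContPt ξ t})]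
        (fun _ => φ (ξ t)) :=
      (hcp.filter_mono (nhdsWithin_mono t Set.diff_subset)).mono fun s hs => by show φ (ξ s) = φ (ξ t); rw [hs]
    exact continuousWithinAt_const.congr_of_eventuallyEq hev rfl
  have hS_aem : AEMeasurable S (volume.restrict (Set.Ici (0:ℝ))) :=
    hScont.aemeasurable measurableSet_Ici
  have hf_aesm : AEStronglyMeasurable (fun s => a (ξ s) * S s - b (ξ s))
      (volume.restrict (Set.Ici (0:ℝ))) :=
    (((hxiA a).mul hS_aem).sub (hxiA b)).aestronglyMeasurable
  have hc_aesm : AEStronglyMeasurable (fun s => c (ξ s))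
      (volume.restrict (Set.Ici (0:ℝ))) := (hxiA c).aestronglyMeasurable
  -- integrability
  have hInt : ∀ (φ : Env → ℝ) (ψ : ℝ → ℝ), ContinuousOn ψ (Set.Ici 0) → ∀ T : ℝ, 0 ≤ T →
      IntervalIntegrable (fun s => φ (ξ s) * ψ s) volume 0 T := by
    intro φ ψ hψ T hT
    rw [intervalIntegrable_iff_integrableOn_Icc_of_le hT]
    obtain ⟨M, hM⟩ := (isCompact_Icc (a := (0:ℝ)) (b := T)).exists_bound_of_continuousOn
      (hψ.mono Set.Icc_subset_Ici_self)
    have haem : AEStronglyMeasurable (fun s => φ (ξ s) * ψ s)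
        (volume.restrict (Set.Icc 0 T)) := by
      have h1 : AEMeasurable (fun s => φ (ξ s)) (volume.restrict (Set.Icc 0 T)) :=
        (hxiA φ).mono_measure (Measure.restrict_mono Set.Icc_subset_Ici_self le_rfl)
      have h2 : AEMeasurable ψ (volume.restrict (Set.Icc 0 T)) :=
        (hψ.mono Set.Icc_subset_Ici_self).aemeasurable measurableSet_Icc
      exact (h1.mul h2).aestronglyMeasurable
    refine ⟨haem, ?_⟩
    refine HasFiniteIntegral.restrict_of_bounded (C := (max |φ true| |φ false|) * M)
      measure_Icc_lt_top ?_
    refine (ae_restrict_iff' measurableSet_Icc).2 (Filter.Eventually.of_forall fun s hs => ?_)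
    have h1 : |φ (ξ s)| ≤ max |φ true| |φ false| := by
      cases hξs : ξ s <;> simp [hξs, le_max_left, le_max_right]
    have h2 : ‖ψ s‖ ≤ M := hM s hs
    calc ‖φ (ξ s) * ψ s‖ = |φ (ξ s)| * ‖ψ s‖ := by
          rw [norm_mul, Real.norm_eq_abs]
      _ ≤ (max |φ true| |φ false|) * M :=
          mul_le_mul h1 h2 (norm_nonneg _) (le_trans (abs_nonneg _) h1)
  have hfInt : ∀ T : ℝ, 0 ≤ T →
      IntervalIntegrable (fun s => a (ξ s) * S s - b (ξ s)) volume 0 T := by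
    intro T hT
    have h1 := hInt a S hScont T hT
    have h2 := hInt b (fun _ => 1) continuousOn_const T hT
    simpa using h1.sub h2
  have hgInt : ∀ T : ℝ, 0 ≤ T →
      IntervalIntegrable (fun s => a (ξ s) * N - b (ξ s)) volume 0 T := by
    intro T hT
    simpa using hInt (fun σ => a σ * N - b σ) (fun _ => 1) continuousOn_const T hT
  have hcInt : ∀ T : ℝ, 0 ≤ T →
      IntervalIntegrable (fun s => c (ξ s)) volume 0 T := by
    intro T hT
    simpa using hInt c (fun _ => 1) continuousOn_const T hT
  -- FTC: right derivative of primitives at continuity points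
  have hFTC : ∀ u : ℝ → ℝ, (∀ T : ℝ, 0 ≤ T → IntervalIntegrable u volume 0 T) →
      AEStronglyMeasurable u (volume.restrict (Set.Ici (0:ℝ))) →
      ∀ t : ℝ, 0 ≤ t → ContinuousWithinAt u (Set.Ici t) t →
      HasDerivWithinAt (fun x => ∫ s in (0:ℝ)..x, u s) (u t) (Set.Ici t) t := by
    intro u hint hmeas t ht hcont
    refine intervalIntegral.integral_hasDerivWithinAt_right (hint t ht)
      ⟨Set.Ioi t, self_mem_nhdsWithin, ?_⟩ (hcont.mono Set.Ioi_subset_Ici_self)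
    exact hmeas.mono_measure
      (Measure.restrict_mono (fun s hs => le_trans ht (le_of_lt hs)) le_rfl)
  -- continuity of integrands at continuity points of ξ
  have hcontf : ∀ t : ℝ, 0 ≤ t → ContPt ξ t →
      ContinuousWithinAt (fun s => a (ξ s) * S s - b (ξ s)) (Set.Ici t) t := by
    intro t ht hcp
    have hev : ∀ᶠ s in nhdsWithin t (Set.Ici t), ξ s = ξ t :=
      hcp.filter_mono (nhdsWithin_mono t (Set.Ici_subset_Ici.2 ht))
    have hbase : ContinuousWithinAt (fun s => a (ξ t) * S s - b (ξ t)) (Set.Ici t) t :=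
      (((hScont t ht).mono (Set.Ici_subset_Ici.2 ht)).const_mul (a (ξ t))).sub
        continuousWithinAt_const
    exact hbase.congr_of_eventuallyEq (hev.mono fun s hs => by show a (ξ s) * S s - b (ξ s) = a (ξ t) * S s - b (ξ t); rw [hs]) rfl
  have hcontc : ∀ t : ℝ, 0 ≤ t → ContPt ξ t →
      ContinuousWithinAt (fun s => c (ξ s)) (Set.Ici t) t := by
    intro t ht hcp
    have hev : ∀ᶠ s in nhdsWithin t (Set.Ici t), ξ s = ξ t :=
      hcp.filter_mono (nhdsWithin_mono t (Set.Ici_subset_Ici.2 ht))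
    exact continuousWithinAt_const.congr_of_eventuallyEq
      (hev.mono fun s hs => by show c (ξ s) = c (ξ t); rw [hs]) rfl
  -- the key identity I t = I 0 * exp(∫₀ᵗ (a S - b))
  have hJKey : ∀ x : ℝ, 0 ≤ x →
      I x * Real.exp (-(∫ s in (0:ℝ)..x, (a (ξ s) * S s - b (ξ s)))) = I 0 := by
    intro x hx
    have hGcont : ContinuousOn (fun t => ∫ s in (0:ℝ)..t, (a (ξ s) * S s - b (ξ s)))
        (Set.Icc 0 x) :=
      Set.uIcc_of_le hx ▸
        intervalIntegral.continuousOn_primitive_interval' (hfInt x hx) Set.left_mem_uIcc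
    have hJcont : ContinuousOn
        (fun t => I t * Real.exp (-(∫ s in (0:ℝ)..t, (a (ξ s) * S s - b (ξ s)))))
        (Set.Icc 0 x) :=
      (hIcont.mono Set.Icc_subset_Ici_self).mul
        (Real.continuous_exp.comp_continuousOn hGcont.neg)
    have hJderiv : ∀ y, y ∈ Set.Ico 0 x → y ∉ {t : ℝ | 0 ≤ t ∧ t ≤ x ∧ ¬ ContPt ξ t} →
        HasDerivWithinAt
          (fun t => I t * Real.exp (-(∫ s in (0:ℝ)..t, (a (ξ s) * S s - b (ξ s)))))
          0 (Set.Ici y) y := by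
      intro y hy hyE
      have hcp : ContPt ξ y := by
        by_contra h; exact hyE ⟨hy.1, hy.2.le, h⟩
      have hI' : HasDerivWithinAt I (a (ξ y) * S y * I y - b (ξ y) * I y) (Set.Ici y) y :=
        (hode y hy.1 hcp).2.mono (Set.Ici_subset_Ici.2 hy.1)
      have hG' : HasDerivWithinAt (fun t => ∫ s in (0:ℝ)..t, (a (ξ s) * S s - b (ξ s)))
          (a (ξ y) * S y - b (ξ y)) (Set.Ici y) y :=
        hFTC _ hfInt hf_aesm y hy.1 (hcontf y hy.1 hcp)
      have hmul := hI'.mul hG'.neg.exp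
      have heq : (a (ξ y) * S y * I y - b (ξ y) * I y) *
            Real.exp (-(∫ s in (0:ℝ)..y, (a (ξ s) * S s - b (ξ s)))) +
          I y * (Real.exp (-(∫ s in (0:ℝ)..y, (a (ξ s) * S s - b (ξ s)))) *
            -(a (ξ y) * S y - b (ξ y))) = 0 := by ring
      exact hmul.congr_deriv heq
    have h := aux_right_deriv_eq (hξ.2 x) hJcont hJderiv hx
    simpa using h
  have hIts : ∀ x : ℝ, 0 ≤ x →
      I x = I 0 * Real.exp (∫ s in (0:ℝ)..x, (a (ξ s) * S s - b (ξ s))) := by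
    intro x hx
    have h := hJKey x hx
    calc I x = I x * Real.exp (-(∫ s in (0:ℝ)..x, (a (ξ s) * S s - b (ξ s)))) *
          Real.exp (∫ s in (0:ℝ)..x, (a (ξ s) * S s - b (ξ s))) := by
          rw [mul_assoc, ← Real.exp_add]; simp
      _ = I 0 * Real.exp (∫ s in (0:ℝ)..x, (a (ξ s) * S s - b (ξ s))) := by rw [h]
  have hIpos : ∀ x : ℝ, 0 ≤ x → 0 < I x := fun x hx =>
    (hIts x hx) ▸ mul_pos hI0 (Real.exp_pos _)
  -- invariance: S + I ≤ N
  have hPN : ∀ x : ℝ, 0 ≤ x → S x + I x ≤ N := by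
    intro x hx
    have hGcont : ContinuousOn (fun t => ∫ s in (0:ℝ)..t, c (ξ s)) (Set.Icc 0 x) :=
      Set.uIcc_of_le hx ▸
        intervalIntegral.continuousOn_primitive_interval' (hcInt x hx) Set.left_mem_uIcc
    have hQle : (S x + I x - N) * Real.exp (∫ s in (0:ℝ)..x, c (ξ s)) ≤
        (S 0 + I 0 - N) * Real.exp (∫ s in (0:ℝ)..(0:ℝ), c (ξ s)) := by
      refine aux_right_deriv_le (hξ.2 x) 0 x
        (fun t => (S t + I t - N) * Real.exp (∫ s in (0:ℝ)..t, c (ξ s)))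
        (fun y => -(b (ξ y) * I y * Real.exp (∫ s in (0:ℝ)..y, c (ξ s)))) ?_ ?_ ?_ hx
      · exact (((hScont.mono Set.Icc_subset_Ici_self).add
          (hIcont.mono Set.Icc_subset_Ici_self)).sub continuousOn_const).mul
          (Real.continuous_exp.comp_continuousOn hGcont)
      · intro y hy hyE
        have hcp : ContPt ξ y := by
          by_contra h; exact hyE ⟨hy.1, hy.2.le, h⟩
        have hS' := (hode y hy.1 hcp).1.mono (Set.Ici_subset_Ici.2 hy.1)
        have hI' := (hode y hy.1 hcp).2.mono (Set.Ici_subset_Ici.2 hy.1)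
        have hGc' : HasDerivWithinAt (fun t => ∫ s in (0:ℝ)..t, c (ξ s))
            (c (ξ y)) (Set.Ici y) y :=
          hFTC _ hcInt hc_aesm y hy.1 (hcontc y hy.1 hcp)
        have hmul := ((hS'.add hI').sub_const N).mul hGc'.exp
        have heq : (-(a (ξ y) * S y * I y) + c (ξ y) * (N - S y - I y) +
              (a (ξ y) * S y * I y - b (ξ y) * I y)) *
              Real.exp (∫ s in (0:ℝ)..y, c (ξ s)) +
            (S y + I y - N) * (Real.exp (∫ s in (0:ℝ)..y, c (ξ s)) * c (ξ y)) =
            -(b (ξ y) * I y * Real.exp (∫ s in (0:ℝ)..y, c (ξ s))) := by ring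
        exact hmul.congr_deriv heq
      · intro y hy _
        have h1 : 0 < b (ξ y) * I y * Real.exp (∫ s in (0:ℝ)..y, c (ξ s)) :=
          mul_pos (mul_pos (hb (ξ y)) (hIpos y hy.1)) (Real.exp_pos _)
        show -(b (ξ y) * I y * Real.exp (∫ s in (0:ℝ)..y, c (ξ s))) ≤ 0
        linarith
    have h0 : (S 0 + I 0 - N) * Real.exp (∫ s in (0:ℝ)..(0:ℝ), c (ξ s)) ≤ 0 := by
      have := Real.exp_pos (∫ s in (0:ℝ)..(0:ℝ), c (ξ s))
      nlinarith
    have hexp := Real.exp_pos (∫ s in (0:ℝ)..x, c (ξ s))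
    nlinarith
  have hSN : ∀ x : ℝ, 0 ≤ x → S x ≤ N := by
    intro x hx
    have h1 := hPN x hx
    have h2 := hIpos x hx
    linarith
  -- comparison of the integrals
  have hGle : ∀ t : ℝ, 0 ≤ t →
      (∫ s in (0:ℝ)..t, (a (ξ s) * S s - b (ξ s))) ≤
      (∫ s in (0:ℝ)..t, (a (ξ s) * N - b (ξ s))) := by
    intro t ht
    refine intervalIntegral.integral_mono_on ht (hfInt t ht) (hgInt t ht) fun s hs => ?_
    exact sub_le_sub_right (mul_le_mul_of_nonneg_left (hSN s hs.1) (ha (ξ s)).le) _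
  -- the limsup bound
  have htend : Filter.Tendsto (fun t : ℝ => Real.log (I 0) * (1 / t) +
      (1 / t) * ∫ s in (0:ℝ)..t, (a (ξ s) * N - b (ξ s))) atTop (nhds lam) := by
    have h1 : Filter.Tendsto (fun t : ℝ => Real.log (I 0) * (1 / t)) atTop (nhds 0) := by
      simpa [one_div] using tendsto_inv_atTop_zero.const_mul (Real.log (I 0))
    simpa using h1.add hmean
  have hev : ∀ᶠ t : ℝ in atTop, ((Real.log (I t) / t : ℝ) : EReal) ≤
      ((Real.log (I 0) * (1 / t) + (1 / t) * ∫ s in (0:ℝ)..t, (a (ξ s) * N - b (ξ s)) : ℝ)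
        : EReal) := by
    filter_upwards [eventually_gt_atTop (0:ℝ)] with t ht
    rw [EReal.coe_le_coe_iff]
    have hlog : Real.log (I t) =
        Real.log (I 0) + ∫ s in (0:ℝ)..t, (a (ξ s) * S s - b (ξ s)) := by
      rw [hIts t ht.le, Real.log_mul hI0.ne' (Real.exp_pos _).ne', Real.log_exp]
    rw [hlog, add_div, mul_one_div, one_div, inv_mul_eq_div]
    gcongr
    exact hGle t ht.le
  calc Filter.limsup (fun t : ℝ => ((Real.log (I t) / t : ℝ) : EReal)) Filter.atTop ≤
      Filter.limsup (fun t : ℝ => ((Real.log (I 0) * (1 / t) +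
        (1 / t) * ∫ s in (0:ℝ)..t, (a (ξ s) * N - b (ξ s)) : ℝ) : EReal)) Filter.atTop :=
      Filter.limsup_le_limsup hev
    _ = (lam : EReal) := Filter.Tendsto.limsup_eq (EReal.tendsto_coe.2 htend)
end

section
/- Suppose the switching signal ξ has mean growth rate λ < 0, and let (S, I) be a solution of the switched SIRS system with S(0) > 0, I(0) > 0 and S(0) + I(0) ≤ N. Then lim_{t→∞} I(t) = 0 and lim_{t→∞} S(t) = N. -/
open Filter MeasureTheory

/-! ### Auxiliary lemmas -/

private lemma sirs_base_mono (f : ℝ → ℝ) {a b : ℝ} (hab : a ≤ b)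
    (hcont : ContinuousOn f (Set.Icc a b))
    (hder : ∀ x ∈ Set.Ico a b, ∃ d : ℝ, 0 ≤ d ∧ HasDerivWithinAt f d (Set.Ici x) x) :
    f a ≤ f b := by
  classical
  have key : ∀ ⦃x⦄, x ∈ Set.Icc a b → (fun _ : ℝ => f a) x ≤ f x :=
    image_le_of_deriv_right_le_deriv_boundary (f' := fun _ => (0:ℝ))
      (B' := fun x => if h : x ∈ Set.Ico a b then (hder x h).choose else 0)
      continuousOn_const (fun x _ => hasDerivWithinAt_const x _ (f a)) le_rfl hcont
      (fun x hx => by simp only [dif_pos hx]; exact (hder x hx).choose_spec.2)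
      (fun x hx => by simp only [dif_pos hx]; exact (hder x hx).choose_spec.1)
  exact key (Set.right_mem_Icc.2 hab)

private lemma sirs_finite_mono {s : Set ℝ} (hs : s.Finite) :
    ∀ (f : ℝ → ℝ) (a b : ℝ), a ≤ b → ContinuousOn f (Set.Icc a b) →
      (∀ x ∈ Set.Ico a b, x ∉ s → ∃ d : ℝ, 0 ≤ d ∧ HasDerivWithinAt f d (Set.Ici x) x) →
      f a ≤ f b := by
  refine Set.Finite.induction_on (motive := fun s _ => ∀ (f : ℝ → ℝ) (a b : ℝ), a ≤ b →
      ContinuousOn f (Set.Icc a b) →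
      (∀ x ∈ Set.Ico a b, x ∉ s → ∃ d : ℝ, 0 ≤ d ∧ HasDerivWithinAt f d (Set.Ici x) x) →
      f a ≤ f b) s hs ?_ ?_
  · intro f a b hab hcont hder
    exact sirs_base_mono f hab hcont (fun x hx => hder x hx (Set.notMem_empty x))
  · intro p t hpt ht IH
    intro f a b hab hcont hder
    by_cases hp : p ∈ Set.Ico a b
    · have h1 : f a ≤ f p :=
        IH f a p hp.1 (hcont.mono (Set.Icc_subset_Icc le_rfl hp.2.le))
          (fun x hx hxt => hder x ⟨hx.1, hx.2.trans hp.2⟩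
            (by simp only [Set.mem_insert_iff, not_or]; exact ⟨ne_of_lt hx.2, hxt⟩))
      have h2 : f p ≤ f b := by
        have hpb : p < b := hp.2
        have key : ∀ x' ∈ Set.Ioo p b, f x' ≤ f b := by
          intro x' hx'
          exact IH f x' b hx'.2.le
            (hcont.mono (Set.Icc_subset_Icc (hp.1.trans hx'.1.le) le_rfl))
            (fun x hx hxt => hder x ⟨hp.1.trans (hx'.1.le.trans hx.1), hx.2⟩
              (by simp only [Set.mem_insert_iff, not_or]
                  exact ⟨fun h => absurd (h ▸ (hx'.1.trans_le hx.1)) (lt_irrefl p), hxt⟩))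
        have hcw : ContinuousWithinAt f (Set.Ioi p) p :=
          (hcont p (Set.mem_Icc.2 ⟨hp.1, hpb.le⟩)).mono_of_mem_nhdsWithin
            (Filter.mem_of_superset (Ioo_mem_nhdsGT hpb)
              (fun x hx => Set.mem_Icc.2 ⟨hp.1.trans hx.1.le, hx.2.le⟩))
        refine le_of_tendsto hcw ?_
        filter_upwards [Ioo_mem_nhdsGT hpb] with x' hx'
        exact key x' hx'
      exact h1.trans h2
    · exact IH f a b hab hcont (fun x hx hxt => hder x hx
        (by simp only [Set.mem_insert_iff, not_or]
            exact ⟨fun h => hp (h ▸ hx), hxt⟩))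

private lemma sirs_mono_Ici (ξ : ℝ → Env) (hξ : IsSwitchingSignal ξ)
    (f : ℝ → ℝ) (hcont : ContinuousOn f (Set.Ici 0)) {a : ℝ} (ha : 0 ≤ a)
    (hder : ∀ x, a ≤ x → ContPt ξ x → ∃ d : ℝ, 0 ≤ d ∧ HasDerivWithinAt f d (Set.Ici x) x)
    {b : ℝ} (hab : a ≤ b) : f a ≤ f b := by
  refine sirs_finite_mono (hξ.2 b) f a b hab (hcont.mono ?_) ?_
  · exact fun x hx => ha.trans hx.1
  · intro x hx hxs
    refine hder x hx.1 ?_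
    by_contra hcp
    exact hxs ⟨ha.trans hx.1, hx.2.le, hcp⟩

private lemma sirs_meas (ξ : ℝ → Env) (_hξ : IsSwitchingSignal ξ) :
    ∃ ξ' : ℝ → Env, Measurable ξ' ∧ ∀ t, 0 ≤ t → ContPt ξ t → ξ' t = ξ t := by
  classical
  have key : ∀ p : ℝ, (0 ≤ p ∧ ContPt ξ p) → ∃ O : Set ℝ, IsOpen O ∧ p ∈ O ∧
      ∀ x ∈ O ∩ Set.Ici (0:ℝ), ξ x = ξ p := by
    rintro p ⟨_hp, hcp⟩
    rcases mem_nhdsWithin.1 hcp with ⟨O, hO, hpO, hsub⟩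
    exact ⟨O, hO, hpO, fun x hx => hsub hx⟩
  choose O hOopen hmemO hvalO using key
  set U : Set ℝ := ⋃ (p : ℝ) (hp : 0 ≤ p ∧ ContPt ξ p) (_ : ξ p = true), O p hp with hU
  have hUopen : IsOpen U := isOpen_iUnion fun p => isOpen_iUnion fun hp =>
    isOpen_iUnion fun _ => hOopen p hp
  refine ⟨fun x => if x ∈ U ∩ Set.Ici (0:ℝ) then true else false,
    Measurable.ite (hUopen.measurableSet.inter measurableSet_Ici) measurable_const
      measurable_const, ?_⟩
  intro t ht hct
  cases hξt : ξ t with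
  | true =>
    show (if t ∈ U ∩ Set.Ici (0:ℝ) then true else false) = true
    rw [if_pos]
    exact ⟨Set.mem_iUnion.2 ⟨t, Set.mem_iUnion.2 ⟨⟨ht, hct⟩,
      Set.mem_iUnion.2 ⟨hξt, hmemO t ⟨ht, hct⟩⟩⟩⟩, ht⟩
  | false =>
    show (if t ∈ U ∩ Set.Ici (0:ℝ) then true else false) = false
    rw [if_neg]
    rintro ⟨htU, ht0⟩
    rcases Set.mem_iUnion.1 htU with ⟨p, hp1⟩
    rcases Set.mem_iUnion.1 hp1 with ⟨hp, hp2⟩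
    rcases Set.mem_iUnion.1 hp2 with ⟨hptrue, htO⟩
    have := (hvalO p hp t ⟨htO, ht0⟩).trans hptrue
    rw [hξt] at this
    exact Bool.false_ne_true this

private lemma sirs_aesm (ξ : ℝ → Env) (hξ : IsSwitchingSignal ξ) (g : Env → ℝ) (T : ℝ) :
    AEStronglyMeasurable (fun s => g (ξ s)) (volume.restrict (Set.Ioc (0:ℝ) T)) := by
  obtain ⟨ξ', hmeas, heq⟩ := sirs_meas ξ hξ
  have hnull : (volume.restrict (Set.Ioc (0:ℝ) T)) {t : ℝ | 0 ≤ t ∧ t ≤ T ∧ ¬ ContPt ξ t} = 0 :=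
    le_antisymm (le_trans (Measure.restrict_le_self _) (((hξ.2 T).measure_zero _)).le) zero_le
  have hm : Measurable (fun s => g (ξ' s)) := (Measurable.of_discrete (f := g)).comp hmeas
  refine (hm.aestronglyMeasurable (μ := volume.restrict (Set.Ioc (0:ℝ) T))).congr ?_
  filter_upwards [ae_restrict_mem measurableSet_Ioc,
    (measure_eq_zero_iff_ae_notMem).mp hnull] with s hs hnb
  have hcp : ContPt ξ s := by
    by_contra hcp
    exact hnb ⟨hs.1.le, hs.2, hcp⟩
  exact congrArg g (heq s hs.1.le hcp)

private lemma sirs_primitive (ξ : ℝ → Env) (hξ : IsSwitchingSignal ξ)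
    (g₁ g₂ : Env → ℝ) (h : ℝ → ℝ) (hh : ContinuousOn h (Set.Ici 0)) :
    (∀ T : ℝ, 0 ≤ T → IntervalIntegrable (fun s => g₁ (ξ s) * h s + g₂ (ξ s)) volume 0 T) ∧
    ContinuousOn (fun t => ∫ s in (0:ℝ)..t, (g₁ (ξ s) * h s + g₂ (ξ s))) (Set.Ici 0) ∧
    (∀ t : ℝ, 0 ≤ t → ContPt ξ t →
      HasDerivWithinAt (fun u => ∫ s in (0:ℝ)..u, (g₁ (ξ s) * h s + g₂ (ξ s)))
        (g₁ (ξ t) * h t + g₂ (ξ t)) (Set.Ici 0) t) := by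
  have hII : ∀ T : ℝ, 0 ≤ T →
      IntervalIntegrable (fun s => g₁ (ξ s) * h s + g₂ (ξ s)) volume 0 T := by
    intro T hT
    rw [intervalIntegrable_iff, Set.uIoc_of_le hT]
    have haesm : AEStronglyMeasurable (fun s => g₁ (ξ s) * h s + g₂ (ξ s))
        (volume.restrict (Set.Ioc (0:ℝ) T)) :=
      ((sirs_aesm ξ hξ g₁ T).mul
        ((hh.mono (fun x hx => hx.1.le)).aestronglyMeasurable measurableSet_Ioc)).add
        (sirs_aesm ξ hξ g₂ T)
    obtain ⟨Ch, hCh⟩ := isCompact_Icc.exists_bound_of_continuousOn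
      (hh.mono (fun x (hx : x ∈ Set.Icc (0:ℝ) T) => hx.1))
    set K := (max ‖g₁ true‖ ‖g₁ false‖) * max Ch 0 + max ‖g₂ true‖ ‖g₂ false‖ with hK
    refine Integrable.mono' (g := fun _ => K)
      (integrableOn_const (C := K) measure_Ioc_lt_top.ne) haesm ?_
    filter_upwards [ae_restrict_mem measurableSet_Ioc] with s hs
    have h1 : ‖g₁ (ξ s)‖ ≤ max ‖g₁ true‖ ‖g₁ false‖ := by
      cases hb : ξ s <;> simp [hb, le_max_left, le_max_right]
    have h2 : ‖g₂ (ξ s)‖ ≤ max ‖g₂ true‖ ‖g₂ false‖ := by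
      cases hb : ξ s <;> simp [hb, le_max_left, le_max_right]
    have h3 : ‖h s‖ ≤ max Ch 0 := le_trans (hCh s ⟨hs.1.le, hs.2⟩) (le_max_left _ _)
    calc ‖g₁ (ξ s) * h s + g₂ (ξ s)‖ ≤ ‖g₁ (ξ s)‖ * ‖h s‖ + ‖g₂ (ξ s)‖ := by
          rw [← norm_mul]; exact norm_add_le _ _
      _ ≤ (max ‖g₁ true‖ ‖g₁ false‖) * max Ch 0 + max ‖g₂ true‖ ‖g₂ false‖ :=
          add_le_add (mul_le_mul h1 h3 (norm_nonneg _) ((norm_nonneg _).trans h1)) h2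
      _ = K := rfl
  refine ⟨hII, ?_, ?_⟩
  · intro t ht
    have ht' : (0:ℝ) ≤ t := ht
    have hT1 : (0:ℝ) ≤ t + 1 := by linarith
    have hco : ContinuousOn (fun u => ∫ s in (0:ℝ)..u, (g₁ (ξ s) * h s + g₂ (ξ s)))
        (Set.uIcc (0:ℝ) (t+1)) :=
      intervalIntegral.continuousOn_primitive_interval' (hII (t+1) hT1) Set.left_mem_uIcc
    rw [Set.uIcc_of_le hT1] at hco
    refine (hco.continuousWithinAt ⟨ht', by linarith⟩).mono_of_mem_nhdsWithin ?_
    rw [show Set.Icc (0:ℝ) (t+1) = Set.Ici (0:ℝ) ∩ Set.Iic (t+1) from (Set.Ici_inter_Iic).symm]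
    exact inter_mem self_mem_nhdsWithin
      (mem_nhdsWithin_of_mem_nhds (Iic_mem_nhds (by linarith)))
  · intro t ht hct
    rcases mem_nhdsWithin.1 hct with ⟨O, hOopen, htO, hOsub⟩
    rcases ht.eq_or_lt with heq | hpos
    · subst heq
      have hmemI : O ∩ Set.Ioi (0:ℝ) ∈ nhdsWithin (0:ℝ) (Set.Ioi (0:ℝ)) :=
        inter_mem (mem_nhdsWithin_of_mem_nhds (hOopen.mem_nhds htO)) self_mem_nhdsWithin
      have hms : MeasurableSet (O ∩ Set.Ioi (0:ℝ)) :=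
        (hOopen.inter isOpen_Ioi).measurableSet
      have hsub' : O ∩ Set.Ioi (0:ℝ) ⊆ O ∩ Set.Ici (0:ℝ) :=
        fun x hx => ⟨hx.1, Set.Ioi_subset_Ici_self hx.2⟩
      have hnice : AEStronglyMeasurable (fun s => g₁ (ξ s) * h s + g₂ (ξ s))
          (volume.restrict (O ∩ Set.Ioi (0:ℝ))) := by
        have hbase : AEStronglyMeasurable (fun s => g₁ (ξ 0) * h s + g₂ (ξ 0))
            (volume.restrict (O ∩ Set.Ioi (0:ℝ))) :=
          ((aestronglyMeasurable_const.mul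
            ((hh.mono (fun x hx => Set.Ioi_subset_Ici_self hx.2)).aestronglyMeasurable hms)).add
            aestronglyMeasurable_const)
        refine hbase.congr ?_
        filter_upwards [ae_restrict_mem hms] with s hs
        rw [hOsub (hsub' hs)]
      have hcw : ContinuousWithinAt (fun s => g₁ (ξ s) * h s + g₂ (ξ s)) (Set.Ioi 0) 0 := by
        have hbase : ContinuousWithinAt (fun s => g₁ (ξ 0) * h s + g₂ (ξ 0)) (Set.Ioi 0) 0 :=
          (continuousWithinAt_const.mul
            ((hh 0 Set.self_mem_Ici).mono Set.Ioi_subset_Ici_self)).add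
            continuousWithinAt_const
        refine hbase.congr_of_eventuallyEq ?_ (by rfl)
        filter_upwards [hmemI] with s hs
        rw [hOsub (hsub' hs)]
      exact intervalIntegral.integral_hasDerivWithinAt_right
        (IntervalIntegrable.refl) ⟨O ∩ Set.Ioi (0:ℝ), hmemI, hnice⟩ hcw
    · have hmemN : O ∩ Set.Ioi (0:ℝ) ∈ nhds t :=
        inter_mem (hOopen.mem_nhds htO) (Ioi_mem_nhds hpos)
      have hms : MeasurableSet (O ∩ Set.Ioi (0:ℝ)) :=
        (hOopen.inter isOpen_Ioi).measurableSet
      have hnice : AEStronglyMeasurable (fun s => g₁ (ξ s) * h s + g₂ (ξ s))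
          (volume.restrict (O ∩ Set.Ioi (0:ℝ))) := by
        have hbase : AEStronglyMeasurable (fun s => g₁ (ξ t) * h s + g₂ (ξ t))
            (volume.restrict (O ∩ Set.Ioi (0:ℝ))) :=
          ((aestronglyMeasurable_const.mul
            ((hh.mono (fun x hx => Set.Ioi_subset_Ici_self hx.2)).aestronglyMeasurable hms)).add
            aestronglyMeasurable_const)
        refine hbase.congr ?_
        filter_upwards [ae_restrict_mem hms] with s hs
        rw [hOsub ⟨hs.1, Set.Ioi_subset_Ici_self hs.2⟩]
      have hca : ContinuousAt (fun s => g₁ (ξ s) * h s + g₂ (ξ s)) t := by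
        have hbase : ContinuousAt (fun s => g₁ (ξ t) * h s + g₂ (ξ t)) t :=
          (continuousAt_const.mul ((hh t ht).continuousAt (Ici_mem_nhds hpos))).add
            continuousAt_const
        refine hbase.congr ?_
        filter_upwards [hmemN] with s hs
        rw [hOsub ⟨hs.1, Set.Ioi_subset_Ici_self hs.2⟩]
      exact (intervalIntegral.integral_hasDerivAt_right (hII t ht)
        ⟨O ∩ Set.Ioi (0:ℝ), hmemN, hnice⟩ hca).hasDerivWithinAt

private lemma sirs_primitive' (ξ : ℝ → Env) (hξ : IsSwitchingSignal ξ) (g : Env → ℝ) :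
    (∀ T : ℝ, 0 ≤ T → IntervalIntegrable (fun s => g (ξ s)) volume 0 T) ∧
    ContinuousOn (fun t => ∫ s in (0:ℝ)..t, g (ξ s)) (Set.Ici 0) ∧
    (∀ t : ℝ, 0 ≤ t → ContPt ξ t →
      HasDerivWithinAt (fun u => ∫ s in (0:ℝ)..u, g (ξ s)) (g (ξ t)) (Set.Ici 0) t) := by
  obtain ⟨h1, h2, h3⟩ :=
    sirs_primitive ξ hξ (fun _ => (0:ℝ)) g (fun _ => (0:ℝ)) continuousOn_const
  have e : (fun s => (fun _ : Env => (0:ℝ)) (ξ s) * (fun _ : ℝ => (0:ℝ)) s + g (ξ s))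
      = fun s => g (ξ s) := by funext s; simp
  rw [e] at h1 h2 h3
  refine ⟨h1, h2, fun t ht hct => ?_⟩
  simpa using h3 t ht hct

private lemma sirs_core
    (N : ℝ) (a b c : Env → ℝ)
    (ha : ∀ σ, 0 < a σ) (hb : ∀ σ, 0 < b σ) (hc : ∀ σ, 0 < c σ)
    (ξ : ℝ → Env) (hξ : IsSwitchingSignal ξ)
    (lam : ℝ) (hlam : lam < 0)
    (S I : ℝ → ℝ)
    (hScont : ContinuousOn S (Set.Ici (0:ℝ))) (hIcont : ContinuousOn I (Set.Ici (0:ℝ)))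
    (hode : ∀ t : ℝ, 0 ≤ t → ContPt ξ t →
      HasDerivWithinAt S (-(a (ξ t) * S t * I t) + c (ξ t) * (N - S t - I t)) (Set.Ici (0:ℝ)) t ∧
      HasDerivWithinAt I (a (ξ t) * S t * I t - b (ξ t) * I t) (Set.Ici (0:ℝ)) t)
    (hI0 : 0 < I 0) (hsum : S 0 + I 0 ≤ N)
    (A Cf G : ℝ → ℝ)
    (hAcont : ContinuousOn A (Set.Ici 0))
    (hAder : ∀ t : ℝ, 0 ≤ t → ContPt ξ t →
      HasDerivWithinAt A (a (ξ t) * S t + -(b (ξ t))) (Set.Ici 0) t)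
    (hA0 : A 0 = 0)
    (hAG : ∀ t : ℝ, 0 ≤ t → (∀ s ∈ Set.Icc (0:ℝ) t, S s ≤ N) → A t ≤ G t)
    (hCcont : ContinuousOn Cf (Set.Ici 0))
    (hCder : ∀ t : ℝ, 0 ≤ t → ContPt ξ t → HasDerivWithinAt Cf (c (ξ t)) (Set.Ici 0) t)
    (hC0 : Cf 0 = 0)
    (hClb : ∀ t : ℝ, 0 ≤ t → min (c true) (c false) * t ≤ Cf t)
    (hGtend : Tendsto (fun t : ℝ => (1 / t) * G t) atTop (nhds lam)) :
    Filter.Tendsto I Filter.atTop (nhds 0) ∧ Filter.Tendsto S Filter.atTop (nhds N) := by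
  have hu0 : ∀ t : ℝ, 0 ≤ t → ContPt ξ t →
      HasDerivWithinAt (fun x => I x * Real.exp (-(A x))) 0 (Set.Ici 0) t := by
    intro t ht hct
    have hI' := (hode t ht hct).2
    have hexp := ((hAder t ht hct).fun_neg).exp
    have hmul := hI'.fun_mul hexp
    exact hmul.congr_deriv (by ring)
  have hucont : ContinuousOn (fun x => I x * Real.exp (-(A x))) (Set.Ici 0) :=
    hIcont.mul (Real.continuous_exp.comp_continuousOn hAcont.neg)
  have huconst : ∀ t : ℝ, 0 ≤ t → I t * Real.exp (-(A t)) = I 0 := by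
    intro t ht
    have hle1 : I 0 * Real.exp (-(A 0)) ≤ I t * Real.exp (-(A t)) :=
      sirs_mono_Ici ξ hξ _ hucont le_rfl
        (fun x hx hcx => ⟨0, le_rfl, (hu0 x hx hcx).mono (Set.Ici_subset_Ici.2 hx)⟩) ht
    have hle2 : -(I 0 * Real.exp (-(A 0))) ≤ -(I t * Real.exp (-(A t))) :=
      sirs_mono_Ici ξ hξ (fun x => -(I x * Real.exp (-(A x)))) hucont.neg le_rfl
        (fun x hx hcx => ⟨0, le_rfl, by
          simpa using ((hu0 x hx hcx).mono (Set.Ici_subset_Ici.2 hx)).fun_neg⟩) ht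
    have heq : I t * Real.exp (-(A t)) = I 0 * Real.exp (-(A 0)) :=
      le_antisymm (by linarith) hle1
    rw [heq, hA0, neg_zero, Real.exp_zero, mul_one]
  have hIform : ∀ t : ℝ, 0 ≤ t → I t = I 0 * Real.exp (A t) := by
    intro t ht
    have h := huconst t ht
    rw [Real.exp_neg] at h
    rw [← h]
    field_simp
  have hIpos : ∀ t : ℝ, 0 ≤ t → 0 < I t := by
    intro t ht
    rw [hIform t ht]
    exact mul_pos hI0 (Real.exp_pos _)
  have hvder : ∀ t : ℝ, 0 ≤ t → ContPt ξ t →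
      HasDerivWithinAt (fun x => (N - (S x + I x)) * Real.exp (Cf x))
        (b (ξ t) * I t * Real.exp (Cf t)) (Set.Ici 0) t := by
    intro t ht hct
    have hS' := (hode t ht hct).1
    have hI' := (hode t ht hct).2
    have hW' := (hS'.fun_add hI').const_sub N
    have hmul := hW'.fun_mul ((hCder t ht hct).exp)
    exact hmul.congr_deriv (by ring)
  have hvcont : ContinuousOn (fun x => (N - (S x + I x)) * Real.exp (Cf x)) (Set.Ici 0) :=
    (continuousOn_const.sub (hScont.add hIcont)).mul
      (Real.continuous_exp.comp_continuousOn hCcont)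
  have hWpos : ∀ t : ℝ, 0 ≤ t → 0 ≤ N - (S t + I t) := by
    intro t ht
    have hle : (N - (S 0 + I 0)) * Real.exp (Cf 0) ≤ (N - (S t + I t)) * Real.exp (Cf t) :=
      sirs_mono_Ici ξ hξ _ hvcont le_rfl
        (fun x hx hcx => ⟨b (ξ x) * I x * Real.exp (Cf x),
          mul_nonneg (mul_nonneg (hb _).le (hIpos x hx).le) (Real.exp_pos _).le,
          (hvder x hx hcx).mono (Set.Ici_subset_Ici.2 hx)⟩) ht
    rw [hC0, Real.exp_zero, mul_one] at hle
    have h0 : (0:ℝ) ≤ (N - (S t + I t)) * Real.exp (Cf t) := le_trans (by linarith) hle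
    by_contra hneg
    push_neg at hneg
    nlinarith [Real.exp_pos (Cf t)]
  have hSleN : ∀ t : ℝ, 0 ≤ t → S t ≤ N := by
    intro t ht
    have h1 := hWpos t ht
    have h2 := hIpos t ht
    linarith
  have hGbot : Tendsto G atTop atBot := by
    have h1 : Tendsto (fun t : ℝ => t * ((1/t) * G t)) atTop atBot :=
      Filter.Tendsto.atTop_mul_neg hlam tendsto_id hGtend
    have heq : (fun t : ℝ => t * ((1/t) * G t)) =ᶠ[atTop] G := by
      filter_upwards [eventually_gt_atTop (0:ℝ)] with t ht
      rw [one_div, ← mul_assoc, mul_inv_cancel₀ (ne_of_gt ht), one_mul]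
    exact Filter.Tendsto.congr' heq h1
  have hItend : Tendsto I atTop (nhds 0) := by
    have hexp0 : Tendsto (fun t : ℝ => I 0 * Real.exp (G t)) atTop (nhds 0) := by
      have h2 := (Real.tendsto_exp_atBot.comp hGbot).const_mul (I 0)
      simpa using h2
    refine tendsto_of_tendsto_of_tendsto_of_le_of_le' tendsto_const_nhds hexp0 ?_ ?_
    · filter_upwards [eventually_ge_atTop (0:ℝ)] with t ht
      exact (hIpos t ht).le
    · filter_upwards [eventually_ge_atTop (0:ℝ)] with t ht
      rw [hIform t ht]
      exact mul_le_mul_of_nonneg_left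
        (Real.exp_le_exp.2 (hAG t ht (fun s hs => hSleN s hs.1))) hI0.le
  set c₀ := min (c true) (c false) with hc₀def
  have hc₀ : 0 < c₀ := lt_min (hc _) (hc _)
  set b₁ := max (b true) (b false) with hb₁def
  have hb₁ : 0 < b₁ := lt_of_lt_of_le (hb true) (le_max_left _ _)
  have hCtop : Tendsto Cf atTop atTop := by
    refine tendsto_atTop_mono' atTop ?_ (Tendsto.const_mul_atTop hc₀ tendsto_id)
    filter_upwards [eventually_ge_atTop (0:ℝ)] with t ht
    exact hClb t ht
  have hE0 : Tendsto (fun t => Real.exp (-(Cf t))) atTop (nhds 0) :=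
    Real.tendsto_exp_atBot.comp (tendsto_neg_atTop_atBot.comp hCtop)
  have hWtend : Tendsto (fun t => N - (S t + I t)) atTop (nhds 0) := by
    rw [Metric.tendsto_atTop]
    intro ε hε
    set δ := c₀ * ε / (2 * b₁) with hδdef
    have hδ : 0 < δ := by positivity
    obtain ⟨T₀, hT₀⟩ := Metric.tendsto_atTop.1 hItend δ hδ
    set T := max T₀ 0 with hTdef
    have hT0 : (0:ℝ) ≤ T := le_max_right _ _
    have hIsm : ∀ t : ℝ, T ≤ t → I t ≤ δ := by
      intro t htt
      have h := hT₀ t (le_trans (le_max_left _ _) htt)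
      rw [Real.dist_eq, sub_zero] at h
      exact le_of_lt (lt_of_abs_lt h)
    have hMder : ∀ x : ℝ, T ≤ x → ContPt ξ x → ∃ d : ℝ, 0 ≤ d ∧
        HasDerivWithinAt (fun y => -((N - (S y + I y)) * Real.exp (Cf y)
          - (ε/2) * Real.exp (Cf y))) d (Set.Ici x) x := by
      intro x hx hcx
      have hx0 : (0:ℝ) ≤ x := hT0.trans hx
      have hder := ((hvder x hx0 hcx).sub (((hCder x hx0 hcx).exp).const_mul (ε/2))).neg
      refine ⟨_, ?_, hder.mono (Set.Ici_subset_Ici.2 hx0)⟩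
      have hbb : b (ξ x) ≤ b₁ := by
        cases hxx : ξ x <;> simp [hxx, hb₁def, le_max_left, le_max_right]
      have hcc : c₀ ≤ c (ξ x) := by
        cases hxx : ξ x <;> simp [hxx, hc₀def, min_le_left, min_le_right]
      have h1 : b (ξ x) * I x ≤ b₁ * δ :=
        mul_le_mul hbb (hIsm x hx) (hIpos x hx0).le hb₁.le
      have h2 : b₁ * δ = (ε/2) * c₀ := by
        rw [hδdef]; field_simp
      have h3 : (ε/2) * c₀ ≤ (ε/2) * c (ξ x) :=
        mul_le_mul_of_nonneg_left hcc (by positivity)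
      have h4 : b (ξ x) * I x ≤ (ε/2) * c (ξ x) := h1.trans (h2.le.trans h3)
      have h5 := mul_le_mul_of_nonneg_right h4 (Real.exp_pos (Cf x)).le
      nlinarith [h5]
    have hMcont : ContinuousOn (fun y => -((N - (S y + I y)) * Real.exp (Cf y)
        - (ε/2) * Real.exp (Cf y))) (Set.Ici 0) :=
      ((hvcont.sub (continuousOn_const.mul
        (Real.continuous_exp.comp_continuousOn hCcont)))).neg
    have hMmono : ∀ t : ℝ, T ≤ t →
        (N - (S t + I t)) * Real.exp (Cf t) - (ε/2) * Real.exp (Cf t)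
          ≤ (N - (S T + I T)) * Real.exp (Cf T) - (ε/2) * Real.exp (Cf T) := by
      intro t htt
      have h := sirs_mono_Ici ξ hξ _ hMcont hT0 hMder htt
      linarith
    have hWbound : ∀ t : ℝ, T ≤ t → N - (S t + I t) ≤
        ((N - (S T + I T)) * Real.exp (Cf T) - (ε/2) * Real.exp (Cf T))
          * Real.exp (-(Cf t)) + ε/2 := by
      intro t htt
      have hM := hMmono t htt
      have hE := Real.exp_pos (Cf t)
      rw [Real.exp_neg]
      have h6 := mul_le_mul_of_nonneg_right hM (inv_nonneg.2 hE.le)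
      rw [sub_mul, mul_assoc, mul_assoc, mul_inv_cancel₀ (ne_of_gt hE),
        mul_one, mul_one] at h6
      linarith
    have hlim : Tendsto (fun t => ((N - (S T + I T)) * Real.exp (Cf T)
        - (ε/2) * Real.exp (Cf T)) * Real.exp (-(Cf t)) + ε/2) atTop
        (nhds (((N - (S T + I T)) * Real.exp (Cf T)
          - (ε/2) * Real.exp (Cf T)) * 0 + ε/2)) :=
      (hE0.const_mul _).add tendsto_const_nhds
    have hlt : ((N - (S T + I T)) * Real.exp (Cf T)
        - (ε/2) * Real.exp (Cf T)) * 0 + ε/2 < ε := by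
      rw [mul_zero, zero_add]; linarith
    have hev := hlim.eventually_lt_const hlt
    rw [eventually_atTop] at hev
    obtain ⟨T₁, hT₁⟩ := hev
    refine ⟨max T T₁, fun t htt => ?_⟩
    have h7 : T ≤ t := le_trans (le_max_left _ _) htt
    have h8 := hT₁ t (le_trans (le_max_right _ _) htt)
    rw [Real.dist_eq, sub_zero, abs_of_nonneg (hWpos t (hT0.trans h7))]
    exact lt_of_le_of_lt (hWbound t h7) h8
  have hStend : Tendsto S atTop (nhds N) := by
    have h1 : Tendsto (fun t => N - ((N - (S t + I t)) + I t)) atTop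
        (nhds (N - (0 + 0))) := tendsto_const_nhds.sub (hWtend.add hItend)
    have heq : (fun t => N - ((N - (S t + I t)) + I t)) = S := by funext t; ring
    rw [heq] at h1
    simpa using h1
  exact ⟨hItend, hStend⟩

/-- if `λ < 0` then the disease dies out:
`I(t) → 0` and `S(t) → N` as `t → ∞`. -/
theorem sirs_extinction_of_disease
    (N : ℝ) (hN : 0 < N) (a b c : Env → ℝ)
    (ha : ∀ σ, 0 < a σ) (hb : ∀ σ, 0 < b σ) (hc : ∀ σ, 0 < c σ)
    (ξ : ℝ → Env) (hξ : IsSwitchingSignal ξ)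
    (lam : ℝ) (hlam : lam < 0) (hmean : HasMeanGrowthRate N a b ξ lam)
    (S I : ℝ → ℝ) (hsol : IsSIRSSolution N a b c ξ S I)
    (hS0 : 0 < S 0) (hI0 : 0 < I 0) (hsum : S 0 + I 0 ≤ N) :
    Filter.Tendsto I Filter.atTop (nhds 0) ∧
    Filter.Tendsto S Filter.atTop (nhds N) := by
  classical
  obtain ⟨hScont, hIcont, hode⟩ := hsol
  obtain ⟨hAint, hAcont, hAder⟩ :=
    sirs_primitive ξ hξ a (fun σ => -(b σ)) S hScont
  obtain ⟨hCint, hCcont, hCder⟩ := sirs_primitive' ξ hξ c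
  obtain ⟨hGint, -, -⟩ := sirs_primitive' ξ hξ (fun σ => a σ * N - b σ)
  refine sirs_core N a b c ha hb hc ξ hξ lam hlam S I hScont hIcont hode hI0 hsum
    (fun u => ∫ s in (0:ℝ)..u, (a (ξ s) * S s + -(b (ξ s))))
    (fun u => ∫ s in (0:ℝ)..u, c (ξ s))
    (fun u => ∫ s in (0:ℝ)..u, (a (ξ s) * N - b (ξ s)))
    hAcont hAder intervalIntegral.integral_same ?_ hCcont hCder
    intervalIntegral.integral_same ?_ hmean
  · intro t ht hS
    exact intervalIntegral.integral_mono_on ht (hAint t ht) (hGint t ht)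
      (fun s hs => by nlinarith [mul_le_mul_of_nonneg_left (hS s hs) (ha (ξ s)).le])
  · intro t ht
    have hpt : ∀ s ∈ Set.Icc (0:ℝ) t, min (c true) (c false) ≤ c (ξ s) := by
      intro s _
      cases hxx : ξ s <;> simp [hxx, min_le_left, min_le_right]
    have h := intervalIntegral.integral_mono_on ht intervalIntegrable_const (hCint t ht) hpt
    rwa [intervalIntegral.integral_const, sub_zero, smul_eq_mul, mul_comm] at h
end

section
/- Let ξ be any switching signal and let (S, I) be a solution of the switched SIRS system with S(0) ≥ 0, I(0) ≥ 0 and S(0) + I(0) ≤ N. If lim_{t→∞} I(t) = 0, then lim_{t→∞} S(t) = N. -/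
open Filter MeasureTheory

/-- A function continuous on `[x,y]` whose derivative is negative at all points of
`(x,y)` outside a finite bad set `B` satisfies `f y ≤ f x`. -/
lemma antitone_aux {B : Set ℝ} (hB : B.Finite) (f : ℝ → ℝ) :
    ∀ x y : ℝ, x ≤ y →
      ContinuousOn f (Set.Icc x y) →
      (∀ t ∈ Set.Ioo x y, t ∉ B → ∃ d, HasDerivAt f d t ∧ d < 0) →
      f y ≤ f x := by
  refine Set.Finite.induction_on (motive := fun B _ => ∀ x y : ℝ, x ≤ y →
      ContinuousOn f (Set.Icc x y) →
      (∀ t ∈ Set.Ioo x y, t ∉ B → ∃ d, HasDerivAt f d t ∧ d < 0) →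
      f y ≤ f x) B hB ?_ ?_
  ·
    intro x y hxy hcont hd
    rcases eq_or_lt_of_le hxy with rfl | hlt
    · exact le_rfl
    have hSA : StrictAntiOn f (Set.Icc x y) := by
      apply strictAntiOn_of_deriv_neg (convex_Icc x y) hcont
      intro t ht
      rw [interior_Icc] at ht
      obtain ⟨d, hdd, hdneg⟩ := hd t ht (Set.notMem_empty t)
      rwa [hdd.deriv]
    exact (hSA (Set.left_mem_Icc.2 hxy) (Set.right_mem_Icc.2 hxy) hlt).le
  · intro p B' hpB' hB'fin ih
    intro x y hxy hcont hd
    by_cases hp : p ∈ Set.Ioo x y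
    · have h1 : f p ≤ f x := by
        refine ih x p hp.1.le (hcont.mono (Set.Icc_subset_Icc le_rfl hp.2.le)) ?_
        intro t ht htB'
        refine hd t ⟨ht.1, ht.2.trans hp.2⟩ ?_
        simp only [Set.mem_insert_iff, not_or]
        exact ⟨ne_of_lt ht.2, htB'⟩
      have h2 : f y ≤ f p := by
        refine ih p y hp.2.le (hcont.mono (Set.Icc_subset_Icc hp.1.le le_rfl)) ?_
        intro t ht htB'
        refine hd t ⟨hp.1.trans ht.1, ht.2⟩ ?_
        simp only [Set.mem_insert_iff, not_or]
        exact ⟨(ne_of_lt ht.1).symm, htB'⟩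
      exact h2.trans h1
    · refine ih x y hxy hcont ?_
      intro t ht htB'
      refine hd t ht ?_
      simp only [Set.mem_insert_iff, not_or]
      exact ⟨fun h => hp (h ▸ ht), htB'⟩

/-- If `f` is continuous on `[T,∞)` and, outside a locally finite bad set,
has derivative `≤ -κ < 0` whenever `f ≥ ε'`, then eventually `f ≤ ε'`. -/
lemma eventually_le_helper (f : ℝ → ℝ) (Bad : Set ℝ) (T ε' κ : ℝ)
    (hBad : ∀ y : ℝ, (Bad ∩ Set.Icc T y).Finite)
    (hε' : 0 < ε') (hκ : 0 < κ)
    (hcont : ContinuousOn f (Set.Ici T))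
    (hd : ∀ t, T ≤ t → t ∉ Bad → ε' ≤ f t → ∃ d, HasDerivAt f d t ∧ d ≤ -κ) :
    ∀ᶠ t in atTop, f t ≤ ε' := by
  -- Step 1: f eventually dips below ε'
  have step1 : ∃ t₀, T ≤ t₀ ∧ f t₀ ≤ ε' := by
    by_contra h
    push_neg at h
    have hfT : ε' < f T := h T le_rfl
    set y := T + 2 * (f T - ε') / κ + 1 with hy_def
    have hyT : T < y := by
      have : 0 < 2 * (f T - ε') / κ := div_pos (by linarith) hκ
      simp only [hy_def]; linarith
    set g : ℝ → ℝ := fun t => f t + κ / 2 * t with hg_def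
    have hgy : g y ≤ g T := by
      refine antitone_aux (hBad y) g T y hyT.le ?_ ?_
      · exact ((hcont.mono (Set.Icc_subset_Ici_self)).add
          ((continuous_const.mul continuous_id).continuousOn))
      · intro t ht htB
        have htBad : t ∉ Bad := fun hb => htB ⟨hb, ht.1.le, ht.2.le⟩
        obtain ⟨d, hdd, hdle⟩ := hd t ht.1.le htBad (h t ht.1.le).le
        refine ⟨d + κ / 2, ?_, by linarith⟩
        have h2 : HasDerivAt (fun s => κ / 2 * s) (κ / 2) t := by
          simpa using (hasDerivAt_id t).const_mul (κ / 2)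
        exact hdd.add h2
    have hkey : κ / 2 * (y - T) = (f T - ε') + κ / 2 := by
      have hκ' : κ ≠ 0 := ne_of_gt hκ
      field_simp [hy_def]
      rw [hy_def]
      have h5 : κ * (2 * (f T - ε') / κ) = 2 * (f T - ε') := by field_simp
      linear_combination h5
    have : f y ≤ ε' - κ / 2 := by
      simp only [hg_def] at hgy
      nlinarith [hgy]
    have := h y hyT.le
    linarith
  -- Step 2: once below ε', f stays below ε'
  obtain ⟨t₀, ht₀T, ht₀⟩ := step1
  refine eventually_atTop.2 ⟨t₀, fun y hy => ?_⟩
  by_contra hy'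
  push_neg at hy'
  have ht₀y : t₀ < y := lt_of_le_of_ne hy (fun h => by rw [h] at ht₀; linarith)
  set A := Set.Icc t₀ y ∩ f ⁻¹' Set.Iic ε' with hA_def
  have hA_closed : IsClosed A :=
    (hcont.mono (fun t ht => le_trans ht₀T ht.1)).preimage_isClosed_of_isClosed
      isClosed_Icc isClosed_Iic
  have hA_ne : A.Nonempty := ⟨t₀, ⟨le_rfl, ht₀y.le⟩, ht₀⟩
  have hA_bdd : BddAbove A := (bddAbove_Icc).mono Set.inter_subset_left
  set m := sSup A with hm_def
  have hmA : m ∈ A := hA_closed.csSup_mem hA_ne hA_bdd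
  have hmIcc : m ∈ Set.Icc t₀ y := hmA.1
  have hfm : f m ≤ ε' := hmA.2
  have hmy : m < y := lt_of_le_of_ne hmIcc.2 (fun h => by rw [h] at hfm; linarith)
  have habove : ∀ t ∈ Set.Ioo m y, ε' < f t := by
    intro t ht
    by_contra hft
    push_neg at hft
    have htA : t ∈ A := ⟨⟨hmIcc.1.trans ht.1.le, ht.2.le⟩, hft⟩
    have := le_csSup hA_bdd htA
    exact absurd this (not_le.2 ht.1)
  have : f y ≤ f m := by
    refine antitone_aux (hBad y) f m y hmy.le
      (hcont.mono (fun t ht => le_trans (ht₀T.trans hmIcc.1) ht.1)) ?_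
    intro t ht htB
    have htBad : t ∉ Bad := fun hb =>
      htB ⟨hb, (ht₀T.trans hmIcc.1).trans ht.1.le, ht.2.le⟩
    obtain ⟨d, hdd, hdle⟩ := hd t ((ht₀T.trans hmIcc.1).trans ht.1.le) htBad
      (habove t ht).le
    exact ⟨d, hdd, lt_of_le_of_lt hdle (by linarith)⟩
  linarith

/-- if `I(t) → 0` then `S(t) → N`. -/
theorem sirs_susceptibles_tend_to_N
    (N : ℝ) (hN : 0 < N) (a b c : Env → ℝ)
    (ha : ∀ σ, 0 < a σ) (hb : ∀ σ, 0 < b σ) (hc : ∀ σ, 0 < c σ)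
    (ξ : ℝ → Env) (hξ : IsSwitchingSignal ξ)
    (S I : ℝ → ℝ) (hsol : IsSIRSSolution N a b c ξ S I)
    (hS0 : 0 ≤ S 0) (hI0 : 0 ≤ I 0) (hsum : S 0 + I 0 ≤ N)
    (hItend : Filter.Tendsto I Filter.atTop (nhds 0)) :
    Filter.Tendsto S Filter.atTop (nhds N) := by
  obtain ⟨hScont, hIcont, hode⟩ := hsol
  set u : ℝ → ℝ := fun t => N - S t - I t with hu_def
  have hucont : ContinuousOn u (Set.Ici 0) :=
    (continuousOn_const.sub hScont).sub hIcont
  have huderiv : ∀ t : ℝ, 0 < t → ContPt ξ t →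
      HasDerivAt u (b (ξ t) * I t - c (ξ t) * u t) t := by
    intro t ht hcpt
    obtain ⟨h1, h2⟩ := hode t ht.le hcpt
    have h3 := (h1.add h2).const_sub N
    have heq : (fun x => N - (S x + I x)) = u := by
      funext x; simp only [hu_def]; ring
    rw [show (fun x => N - (S + I) x) = u from heq] at h3
    have h4 : -(-(a (ξ t) * S t * I t) + c (ξ t) * (N - S t - I t) +
        (a (ξ t) * S t * I t - b (ξ t) * I t)) = b (ξ t) * I t - c (ξ t) * u t := by
      simp only [hu_def]; ring
    rw [h4] at h3
    exact h3.hasDerivAt (Ici_mem_nhds ht)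
  suffices hu : Tendsto u atTop (nhds 0) by
    have hSeq : S = fun t => N - u t - I t := by
      funext t; simp only [hu_def]; ring
    rw [hSeq]
    have := (tendsto_const_nhds (x := N) (f := atTop)).sub hu |>.sub hItend
    simpa using this
  rw [Metric.tendsto_nhds]
  intro ε hε
  set cm := min (c true) (c false) with hcm_def
  set bM := max (b true) (b false) with hbM_def
  have hcm : 0 < cm := lt_min (hc true) (hc false)
  have hbM : 0 < bM := lt_of_lt_of_le (hb true) (le_max_left _ _)
  have hcmle : ∀ σ : Env, cm ≤ c σ := by
    intro σ; cases σ
    · exact min_le_right _ _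
    · exact min_le_left _ _
  have hble : ∀ σ : Env, b σ ≤ bM := by
    intro σ; cases σ
    · exact le_max_right _ _
    · exact le_max_left _ _
  set ε' : ℝ := ε / 2 with hε'_def
  have hε' : 0 < ε' := by positivity
  set δ : ℝ := cm * ε' / (2 * bM) with hδ_def
  have hδ : 0 < δ := by positivity
  set κ : ℝ := cm * ε' / 2 with hκ_def
  have hκ : 0 < κ := by positivity
  have hbMδ : bM * δ = κ := by
    rw [hδ_def, hκ_def]; field_simp
  -- eventually |I| ≤ δ
  obtain ⟨T₁, hT₁⟩ := eventually_atTop.1 (Metric.tendsto_nhds.1 hItend δ hδ)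
  set T := max T₁ 1 with hT_def
  have hT1 : (1:ℝ) ≤ T := le_max_right _ _
  have hT0 : (0:ℝ) < T := lt_of_lt_of_le one_pos hT1
  have hIbd : ∀ t, T ≤ t → |I t| ≤ δ := by
    intro t ht
    have := hT₁ t (le_trans (le_max_left _ _) ht)
    rw [Real.dist_eq, sub_zero] at this
    exact this.le
  set Bad : Set ℝ := {t : ℝ | 0 ≤ t ∧ ¬ ContPt ξ t} with hBad_def
  have hBadfin : ∀ y : ℝ, (Bad ∩ Set.Icc T y).Finite := by
    intro y
    refine (hξ.2 y).subset ?_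
    rintro t ⟨⟨ht0, htc⟩, htT, hty⟩
    exact ⟨ht0, hty, htc⟩
  have hgood : ∀ t, T ≤ t → t ∉ Bad → ContPt ξ t := by
    intro t ht hb
    by_contra hcon
    exact hb ⟨le_trans hT0.le ht, hcon⟩
  -- apply the helper to u
  have hup : ∀ᶠ t in atTop, u t ≤ ε' := by
    refine eventually_le_helper u Bad T ε' κ hBadfin hε' hκ
      (hucont.mono (fun t ht => le_trans hT0.le ht)) ?_
    intro t ht htBad hεu
    have hpos : 0 < t := lt_of_lt_of_le hT0 ht
    refine ⟨b (ξ t) * I t - c (ξ t) * u t, huderiv t hpos (hgood t ht htBad), ?_⟩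
    have hIle : I t ≤ δ := le_trans (le_abs_self _) (hIbd t ht)
    have h1 : b (ξ t) * I t ≤ bM * δ :=
      le_trans (mul_le_mul_of_nonneg_left hIle (hb _).le)
        (mul_le_mul_of_nonneg_right (hble _) hδ.le)
    have h2 : cm * ε' ≤ c (ξ t) * u t :=
      mul_le_mul (hcmle _) hεu hε'.le (hc _).le
    have h3 : cm * ε' = 2 * κ := by rw [hκ_def]; ring
    linarith
  -- apply the helper to -u
  have hdown : ∀ᶠ t in atTop, -u t ≤ ε' := by
    refine eventually_le_helper (fun t => -u t) Bad T ε' κ hBadfin hε' hκ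
      ((hucont.mono (fun t ht => le_trans hT0.le ht)).neg) ?_
    intro t ht htBad hεu
    have hpos : 0 < t := lt_of_lt_of_le hT0 ht
    refine ⟨-(b (ξ t) * I t - c (ξ t) * u t),
      (huderiv t hpos (hgood t ht htBad)).neg, ?_⟩
    have hIge : -δ ≤ I t := neg_le_of_abs_le (hIbd t ht)
    have h1 : -(bM * δ) ≤ b (ξ t) * I t := by
      have : b (ξ t) * (-δ) ≤ b (ξ t) * I t :=
        mul_le_mul_of_nonneg_left hIge (hb _).le
      have h2 : b (ξ t) * δ ≤ bM * δ :=
        mul_le_mul_of_nonneg_right (hble _) hδ.le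
      nlinarith
    have hune : u t ≤ -ε' := by linarith
    have h2 : c (ξ t) * u t ≤ cm * u t :=
      mul_le_mul_of_nonpos_right (hcmle _) (by linarith : u t ≤ 0)
    have h3 : cm * u t ≤ cm * (-ε') := mul_le_mul_of_nonneg_left hune hcm.le
    have h4 : cm * ε' = 2 * κ := by rw [hκ_def]; ring
    nlinarith
  filter_upwards [hup, hdown] with t h1 h2
  rw [Real.dist_eq, sub_zero]
  have : |u t| ≤ ε' := abs_le.2 ⟨by linarith, h1⟩
  rw [hε'_def] at this
  linarith
end

section
/- Suppose a(σ)·N ≤ b(σ) for every σ ∈ E (i.e. N ≤ b(σ)/a(σ) in both environmental states). Then for every switching signal ξ and every solution (S, I) of the switched SIRS system with S(0) > 0, I(0) > 0 and S(0) + I(0) ≤ N, one has lim_{t→∞} I(t) = 0 and lim_{t→∞} S(t) = N. -/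
open Filter MeasureTheory

section SirsAux

open Set

/-- Monotonicity from a nonnegative one-sided derivative (no exceptional points). -/
lemma sirs_mono_aux0 {f : ℝ → ℝ} {x y : ℝ} (hx : 0 ≤ x) (hxy : x ≤ y)
    (hf : ContinuousOn f (Icc x y))
    (hd : ∀ t ∈ Ioo x y, ∃ d, HasDerivWithinAt f d (Ici (0:ℝ)) t ∧ 0 ≤ d) :
    f x ≤ f y := by
  choose! g hg hg0 using hd
  have hmono := monotoneOn_of_hasDerivWithinAt_nonneg (f' := g) (convex_Icc x y) hf
    (fun t ht => ?_) (fun t ht => ?_)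
  · exact hmono (left_mem_Icc.2 hxy) (right_mem_Icc.2 hxy) hxy
  · rw [interior_Icc] at ht ⊢
    exact (hg t ht).mono (fun z hz => le_trans hx hz.1.le)
  · rw [interior_Icc] at ht; exact hg0 t ht

/-- Monotonicity from a nonnegative one-sided derivative off a finite exceptional set. -/
lemma sirs_mono_aux : ∀ (n : ℕ) (E : Finset ℝ), E.card ≤ n → ∀ (f : ℝ → ℝ) (x y : ℝ),
    0 ≤ x → x ≤ y → ContinuousOn f (Icc x y) →
    (∀ t ∈ Ioo x y, t ∉ E → ∃ d, HasDerivWithinAt f d (Ici (0:ℝ)) t ∧ 0 ≤ d) →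
    f x ≤ f y := by
  intro n
  induction n with
  | zero =>
    intro E hE f x y hx hxy hf hd
    have hE0 : E = ∅ := Finset.card_eq_zero.mp (Nat.le_zero.mp hE)
    subst hE0
    exact sirs_mono_aux0 hx hxy hf (fun t ht => hd t ht (Finset.notMem_empty t))
  | succ n IH =>
    intro E hE f x y hx hxy hf hd
    by_cases hcase : ∃ e ∈ E, e ∈ Ioo x y
    · obtain ⟨e, heE, hex⟩ := hcase
      have hcard : (E.erase e).card ≤ n := by
        have := Finset.card_erase_of_mem heE; omega
      have h1 : f x ≤ f e := by
        refine IH (E.erase e) hcard f x e hx hex.1.le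
          (hf.mono (Icc_subset_Icc le_rfl hex.2.le)) (fun t ht htE => ?_)
        refine hd t ⟨ht.1, ht.2.trans hex.2⟩ (fun htE' => htE ?_)
        exact Finset.mem_erase.2 ⟨ne_of_lt ht.2, htE'⟩
      have h2 : f e ≤ f y := by
        refine IH (E.erase e) hcard f e y (hx.trans hex.1.le) hex.2.le
          (hf.mono (Icc_subset_Icc hex.1.le le_rfl)) (fun t ht htE => ?_)
        refine hd t ⟨hex.1.trans ht.1, ht.2⟩ (fun htE' => htE ?_)
        exact Finset.mem_erase.2 ⟨(ne_of_lt ht.1).symm, htE'⟩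
      exact h1.trans h2
    · push_neg at hcase
      exact sirs_mono_aux0 hx hxy hf (fun t ht => hd t ht (fun hmem => hcase t hmem ht))

/-- Monotonicity from a nonnegative one-sided derivative off the discontinuity
set of a switching signal. -/
lemma sirs_mono_sig {ξ : ℝ → Env} (hξ : IsSwitchingSignal ξ) (f : ℝ → ℝ) {x y : ℝ}
    (hx : 0 ≤ x) (hxy : x ≤ y) (hf : ContinuousOn f (Icc x y))
    (hd : ∀ t ∈ Ioo x y, ContPt ξ t → ∃ d, HasDerivWithinAt f d (Ici (0:ℝ)) t ∧ 0 ≤ d) :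
    f x ≤ f y := by
  classical
  set E := (hξ.2 y).toFinset with hEdef
  refine sirs_mono_aux E.card E le_rfl f x y hx hxy hf (fun t ht htE => hd t ht ?_)
  by_contra hcp
  exact htE ((hξ.2 y).mem_toFinset.2 ⟨le_trans hx ht.1.le, ht.2.le, hcp⟩)

/-- Antitonicity from a nonpositive one-sided derivative off the discontinuity
set of a switching signal. -/
lemma sirs_anti_sig {ξ : ℝ → Env} (hξ : IsSwitchingSignal ξ) (f : ℝ → ℝ) {x y : ℝ}
    (hx : 0 ≤ x) (hxy : x ≤ y) (hf : ContinuousOn f (Icc x y))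
    (hd : ∀ t ∈ Ioo x y, ContPt ξ t → ∃ d, HasDerivWithinAt f d (Ici (0:ℝ)) t ∧ d ≤ 0) :
    f y ≤ f x := by
  have := sirs_mono_sig hξ (fun u => -f u) hx hxy hf.neg (fun t ht hcp => by
    obtain ⟨d, h1, h2⟩ := hd t ht hcp
    exact ⟨-d, h1.neg, neg_nonneg.2 h2⟩)
  simp only [neg_le_neg_iff] at this
  exact this

end SirsAux

set_option maxHeartbeats 1000000 in
/-- if `a(σ)·N ≤ b(σ)` in both environmental states, then for
every switching signal and every positive solution the disease dies out. -/
theorem sirs_extinction_when_subcritical_in_both_states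
    (N : ℝ) (hN : 0 < N) (a b c : Env → ℝ)
    (ha : ∀ σ, 0 < a σ) (hb : ∀ σ, 0 < b σ) (hc : ∀ σ, 0 < c σ)
    (hsub : ∀ σ, a σ * N ≤ b σ) :
    ∀ (ξ : ℝ → Env), IsSwitchingSignal ξ →
    ∀ (S I : ℝ → ℝ), IsSIRSSolution N a b c ξ S I →
    0 < S 0 → 0 < I 0 → S 0 + I 0 ≤ N →
    Filter.Tendsto I Filter.atTop (nhds 0) ∧
    Filter.Tendsto S Filter.atTop (nhds N) := by
  intro ξ hξ S I hsol hS0 hI0 hSI0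
  obtain ⟨hScont, hIcont, hode⟩ := hsol
  -- extremal constants
  set Amax := max (a true) (a false) with hAmax
  set α := min (a true) (a false) with hαdef
  set bmax := max (b true) (b false) with hbmax
  set cmin := min (c true) (c false) with hcmin
  have haA : ∀ σ, a σ ≤ Amax := by intro σ; cases σ <;> simp [hAmax]
  have hαle : ∀ σ, α ≤ a σ := by intro σ; cases σ <;> simp [hαdef]
  have hαpos : 0 < α := lt_min (ha true) (ha false)
  have hbB : ∀ σ, b σ ≤ bmax := by intro σ; cases σ <;> simp [hbmax]
  have hbmaxpos : 0 < bmax := lt_of_lt_of_le (hb true) (hbB true)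
  have hcle : ∀ σ, cmin ≤ c σ := by intro σ; cases σ <;> simp [hcmin]
  have hcminpos : 0 < cmin := lt_min (hc true) (hc false)
  have hsubIci : ∀ {u v : ℝ}, 0 ≤ u → Set.Icc u v ⊆ Set.Ici (0:ℝ) :=
    fun {u v} hu z hz => hu.trans hz.1
  -- Step 1: I stays positive
  have hIpos : ∀ t, 0 ≤ t → 0 < I t := by
    by_contra hcon
    push_neg at hcon
    obtain ⟨t1, ht1, hIt1⟩ := hcon
    set Z := {t | t ∈ Set.Icc (0:ℝ) t1 ∧ I t ≤ 0} with hZdef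
    have hZne : Z.Nonempty := ⟨t1, ⟨ht1, le_rfl⟩, hIt1⟩
    have hZclosed : IsClosed Z := by
      have : Z = Set.Icc (0:ℝ) t1 ∩ I ⁻¹' Set.Iic 0 := rfl
      rw [this]
      exact (hIcont.mono (hsubIci le_rfl)).preimage_isClosed_of_isClosed
        isClosed_Icc isClosed_Iic
    have hZbdd : BddBelow Z := ⟨0, fun z hz => hz.1.1⟩
    set t0 := sInf Z with ht0def
    have ht0Z : t0 ∈ Z := hZclosed.csInf_mem hZne hZbdd
    have ht00 : 0 ≤ t0 := ht0Z.1.1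
    have hIposlt : ∀ t, 0 ≤ t → t < t0 → 0 < I t := by
      intro t h0 hlt
      by_contra h
      push_neg at h
      exact absurd (csInf_le hZbdd ⟨⟨h0, hlt.le.trans ht0Z.1.2⟩, h⟩) (not_le.2 hlt)
    have ht0pos : 0 < t0 := by
      rcases eq_or_lt_of_le ht00 with h | h
      · exfalso; have := ht0Z.2; rw [← h] at this; linarith
      · exact h
    obtain ⟨M, hM⟩ := (isCompact_Icc (a := (0:ℝ)) (b := t0)).exists_bound_of_continuousOn
      (hScont.mono (hsubIci le_rfl))
    have hM0 : 0 ≤ M := le_trans (norm_nonneg _) (hM 0 ⟨le_rfl, ht00⟩)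
    set K := Amax * M + bmax with hKdef
    have hmono := sirs_mono_sig hξ (fun u => I u * Real.exp (K * u)) le_rfl ht00
      (((hIcont.mono (hsubIci le_rfl))).mul
        ((Real.continuous_exp.comp (continuous_const.mul continuous_id)).continuousOn))
      (fun t ht hcp => ?_)
    · have h1 : I 0 * Real.exp (K * 0) = I 0 := by simp
      have h2 : I t0 * Real.exp (K * t0) ≤ 0 :=
        mul_nonpos_of_nonpos_of_nonneg ht0Z.2 (Real.exp_pos _).le
      simp only [h1] at hmono
      linarith [hmono, h2]
    · have hIt := (hode t ht.1.le hcp).2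
      have hexp : HasDerivAt (fun u => Real.exp (K * u)) (Real.exp (K * t) * K) t := by
        have := (Real.hasDerivAt_exp (K * t)).comp t ((hasDerivAt_id t).const_mul K); simp only [mul_one] at this; exact this
      refine ⟨_, hIt.mul hexp.hasDerivWithinAt, ?_⟩
      have hexppos : 0 < Real.exp (K * t) := Real.exp_pos _
      have hIt' : 0 < I t := hIposlt t ht.1.le ht.2
      have habs := abs_le.1 (by simpa [Real.norm_eq_abs] using hM t ⟨ht.1.le, ht.2.le⟩)
      have hkey : 0 ≤ a (ξ t) * S t - b (ξ t) + K := by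
        have h3 : a (ξ t) * (-M) ≤ a (ξ t) * S t :=
          mul_le_mul_of_nonneg_left habs.1 (ha _).le
        have h4 : a (ξ t) * M ≤ Amax * M := mul_le_mul_of_nonneg_right (haA _) hM0
        have h5 : b (ξ t) ≤ bmax := hbB _
        rw [hKdef]; nlinarith
      nlinarith [mul_nonneg (mul_nonneg hexppos.le hIt'.le) hkey]
  -- Step 2: S + I ≤ N
  have hU : ∀ t, 0 ≤ t → S t + I t ≤ N := by
    by_contra hcon
    push_neg at hcon
    obtain ⟨t2, ht2, hUt2⟩ := hcon
    set Z := {t | t ∈ Set.Icc (0:ℝ) t2 ∧ S t + I t ≤ N} with hZdef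
    have hZne : Z.Nonempty := ⟨0, ⟨le_rfl, ht2⟩, hSI0⟩
    have hZclosed : IsClosed Z := by
      have : Z = Set.Icc (0:ℝ) t2 ∩ (fun t => S t + I t) ⁻¹' Set.Iic N := rfl
      rw [this]
      exact (((hScont.mono (hsubIci le_rfl))).add
        ((hIcont.mono (hsubIci le_rfl)))).preimage_isClosed_of_isClosed
        isClosed_Icc isClosed_Iic
    have hZbdd : BddAbove Z := ⟨t2, fun z hz => hz.1.2⟩
    set t1 := sSup Z with ht1def
    have ht1Z : t1 ∈ Z := hZclosed.csSup_mem hZne hZbdd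
    have ht10 : 0 ≤ t1 := ht1Z.1.1
    have ht1lt : t1 < t2 := by
      rcases eq_or_lt_of_le ht1Z.1.2 with h | h
      · exfalso; have := ht1Z.2; rw [h] at this; linarith
      · exact h
    have hUgt : ∀ t, t1 < t → t ≤ t2 → N < S t + I t := by
      intro t hlt hle
      by_contra h
      push_neg at h
      exact absurd (le_csSup hZbdd ⟨⟨ht10.trans hlt.le, hle⟩, h⟩) (not_le.2 hlt)
    have hanti := sirs_anti_sig hξ (fun u => S u + I u) ht10 ht1lt.le
      (((hScont.mono (hsubIci ht10))).add ((hIcont.mono (hsubIci ht10))))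
      (fun t ht hcp => ?_)
    · have := hUgt t2 ht1lt le_rfl
      have h2 := ht1Z.2
      linarith
    · have h0t : 0 ≤ t := ht10.trans ht.1.le
      have hSd := (hode t h0t hcp).1
      have hId := (hode t h0t hcp).2
      refine ⟨_, hSd.add hId, ?_⟩
      have h1 : 0 < c (ξ t) * (S t + I t - N) :=
        mul_pos (hc _) (by linarith [hUgt t ht.1 ht.2.le])
      have h2 : 0 < b (ξ t) * I t := mul_pos (hb _) (hIpos t h0t)
      nlinarith
  -- Step 3: S stays positive
  have hSpos : ∀ t, 0 ≤ t → 0 < S t := by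
    by_contra hcon
    push_neg at hcon
    obtain ⟨t1, ht1, hSt1⟩ := hcon
    set Z := {t | t ∈ Set.Icc (0:ℝ) t1 ∧ S t ≤ 0} with hZdef
    have hZne : Z.Nonempty := ⟨t1, ⟨ht1, le_rfl⟩, hSt1⟩
    have hZclosed : IsClosed Z := by
      have : Z = Set.Icc (0:ℝ) t1 ∩ S ⁻¹' Set.Iic 0 := rfl
      rw [this]
      exact (hScont.mono (hsubIci le_rfl)).preimage_isClosed_of_isClosed
        isClosed_Icc isClosed_Iic
    have hZbdd : BddBelow Z := ⟨0, fun z hz => hz.1.1⟩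
    set t0 := sInf Z with ht0def
    have ht0Z : t0 ∈ Z := hZclosed.csInf_mem hZne hZbdd
    have ht00 : 0 ≤ t0 := ht0Z.1.1
    have hSposlt : ∀ t, 0 ≤ t → t < t0 → 0 < S t := by
      intro t h0 hlt
      by_contra h
      push_neg at h
      exact absurd (csInf_le hZbdd ⟨⟨h0, hlt.le.trans ht0Z.1.2⟩, h⟩) (not_le.2 hlt)
    obtain ⟨M, hM⟩ := (isCompact_Icc (a := (0:ℝ)) (b := t0)).exists_bound_of_continuousOn
      (hIcont.mono (hsubIci le_rfl))
    have hM0 : 0 ≤ M := le_trans (norm_nonneg _) (hM 0 ⟨le_rfl, ht00⟩)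
    set K := Amax * M with hKdef
    have hmono := sirs_mono_sig hξ (fun u => S u * Real.exp (K * u)) le_rfl ht00
      (((hScont.mono (hsubIci le_rfl))).mul
        ((Real.continuous_exp.comp (continuous_const.mul continuous_id)).continuousOn))
      (fun t ht hcp => ?_)
    · have h1 : S 0 * Real.exp (K * 0) = S 0 := by simp
      have h2 : S t0 * Real.exp (K * t0) ≤ 0 :=
        mul_nonpos_of_nonpos_of_nonneg ht0Z.2 (Real.exp_pos _).le
      simp only [h1] at hmono
      linarith [hmono, h2]
    · have hSd := (hode t ht.1.le hcp).1
      have hexp : HasDerivAt (fun u => Real.exp (K * u)) (Real.exp (K * t) * K) t := by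
        have := (Real.hasDerivAt_exp (K * t)).comp t ((hasDerivAt_id t).const_mul K); simp only [mul_one] at this; exact this
      refine ⟨_, hSd.mul hexp.hasDerivWithinAt, ?_⟩
      have hexppos : 0 < Real.exp (K * t) := Real.exp_pos _
      have hSt' : 0 < S t := hSposlt t ht.1.le ht.2
      have habs := abs_le.1 (by simpa [Real.norm_eq_abs] using hM t ⟨ht.1.le, ht.2.le⟩)
      have hcN : 0 ≤ c (ξ t) * (N - S t - I t) :=
        mul_nonneg (hc _).le (by linarith [hU t ht.1.le])
      have haI : a (ξ t) * I t ≤ K := by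
        have h3 : a (ξ t) * I t ≤ a (ξ t) * M :=
          mul_le_mul_of_nonneg_left habs.2 (ha _).le
        have h4 : a (ξ t) * M ≤ Amax * M := mul_le_mul_of_nonneg_right (haA _) hM0
        rw [hKdef]; linarith
      nlinarith [mul_nonneg (mul_nonneg hexppos.le hSt'.le) (sub_nonneg.2 haI),
        mul_nonneg hexppos.le hcN]
  -- Step 4: I t ≤ ((I 0)⁻¹ + α t)⁻¹, hence I → 0
  have hkey : ∀ t, 0 ≤ t → I t ≤ ((I 0)⁻¹ + α * t)⁻¹ := by
    intro t ht
    have hg := sirs_mono_sig hξ (fun u => (I u)⁻¹ - α * u) le_rfl ht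
      (ContinuousOn.sub
        ((hIcont.mono (hsubIci le_rfl)).inv₀ (fun s hs => (hIpos s hs.1).ne'))
        ((continuous_const.mul continuous_id).continuousOn))
      (fun s hs hcp => ?_)
    · simp only [mul_zero, sub_zero] at hg
      have hpos : 0 < (I 0)⁻¹ + α * t := by positivity
      have h2 : (I 0)⁻¹ + α * t ≤ (I t)⁻¹ := by linarith
      have h3 := one_div_le_one_div_of_le hpos h2
      rw [one_div, one_div, inv_inv] at h3
      exact h3
    · have hIs : 0 < I s := hIpos s hs.1.le
      have hId := (hode s hs.1.le hcp).2
      have hinv := hId.inv hIs.ne'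
      have hlin : HasDerivWithinAt (fun u : ℝ => α * u) α (Set.Ici (0:ℝ)) s := by
        simpa using ((hasDerivAt_id s).const_mul α).hasDerivWithinAt
      refine ⟨_, hinv.sub hlin, ?_⟩
      have hq : α * (I s)^2 ≤ -(a (ξ s) * S s * I s - b (ξ s) * I s) := by
        nlinarith [mul_le_mul_of_nonneg_right (hsub (ξ s)) hIs.le,
          mul_le_mul_of_nonneg_left (hU s hs.1.le) (mul_pos (ha (ξ s)) hIs).le,
          mul_le_mul_of_nonneg_right (hαle (ξ s)) (sq_nonneg (I s))]
      have h5 : α ≤ -(a (ξ s) * S s * I s - b (ξ s) * I s) / (I s)^2 :=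
        (le_div_iff₀ (by positivity)).2 hq
      linarith
  have hItend : Tendsto I atTop (nhds 0) := by
    have hbound : Tendsto (fun t : ℝ => ((I 0)⁻¹ + α * t)⁻¹) atTop (nhds 0) := by
      apply Tendsto.inv_tendsto_atTop
      exact tendsto_atTop_add_const_left _ _
        (Tendsto.const_mul_atTop hαpos tendsto_id)
    exact tendsto_of_tendsto_of_tendsto_of_le_of_le' tendsto_const_nhds hbound
      (eventually_atTop.2 ⟨0, fun t ht => (hIpos t ht).le⟩)
      (eventually_atTop.2 ⟨0, fun t ht => hkey t ht⟩)
  refine ⟨hItend, ?_⟩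
  -- Step 5: R := N - S - I tends to 0
  obtain ⟨R, hRdef⟩ : ∃ R : ℝ → ℝ, R = fun t => N - S t - I t := ⟨_, rfl⟩
  have hRnonneg : ∀ t, 0 ≤ t → 0 ≤ R t := fun t ht => by
    simp only [hRdef]; linarith [hU t ht]
  have hRleN : ∀ t, 0 ≤ t → R t ≤ N := fun t ht => by
    simp only [hRdef]; linarith [hSpos t ht, hIpos t ht]
  have hRcont : ContinuousOn R (Set.Ici (0:ℝ)) := by
    rw [hRdef]; exact (continuousOn_const.sub hScont).sub hIcont
  -- derivative of R
  have hRd : ∀ t, 0 ≤ t → ContPt ξ t →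
      HasDerivWithinAt R (b (ξ t) * I t - c (ξ t) * (N - S t - I t)) (Set.Ici (0:ℝ)) t := by
    intro t ht hcp
    rw [hRdef]
    have h := ((hasDerivWithinAt_const t _ N).sub (hode t ht hcp).1).sub (hode t ht hcp).2
    exact h.congr_deriv (by ring)
  have hRtend : Tendsto R atTop (nhds 0) := by
    rw [Metric.tendsto_atTop]
    intro ε hε
    -- work with ε/2
    set ε2 := ε / 2 with hε2def
    have hε2 : 0 < ε2 := by positivity
    set δ' := cmin * ε2 / (2 * bmax) with hδ'def
    have hδ' : 0 < δ' := by positivity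
    have hbδ' : bmax * δ' = cmin * ε2 / 2 := by
      rw [hδ'def]; field_simp
    obtain ⟨T0, hT0⟩ := eventually_atTop.1 (hItend (Iio_mem_nhds hδ'))
    set T := max T0 0 with hTdef
    have hT0' : ∀ t, T ≤ t → I t < δ' := fun t ht =>
      hT0 t ((le_max_left _ _).trans ht)
    have hTnn : 0 ≤ T := le_max_right _ _
    -- derivative bound at continuity points with t ≥ T and R t ≥ ε2
    have hder : ∀ t, T ≤ t → ContPt ξ t → ε2 ≤ R t →
        b (ξ t) * I t - c (ξ t) * (N - S t - I t) ≤ -(cmin * ε2 / 2) := by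
      intro t htT hcp hRt
      have h0t : 0 ≤ t := hTnn.trans htT
      have h1 : b (ξ t) * I t ≤ bmax * I t :=
        mul_le_mul_of_nonneg_right (hbB _) (hIpos t h0t).le
      have h2 : bmax * I t ≤ bmax * δ' :=
        mul_le_mul_of_nonneg_left (hT0' t htT).le hbmaxpos.le
      have h3 : cmin * ε2 ≤ c (ξ t) * (N - S t - I t) := by
        have := mul_le_mul (hcle (ξ t)) hRt hε2.le (hc (ξ t)).le
        simpa [hRdef] using this
      linarith [hbδ' ▸ h2]
    -- Claim A: some time ≥ T with R < ε2
    have hclaimA : ∃ t2, T ≤ t2 ∧ R t2 < ε2 := by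
      by_contra hcA
      push_neg at hcA
      obtain ⟨δ, hδdef⟩ : ∃ δ : ℝ, δ = cmin * ε2 / 2 := ⟨_, rfl⟩
      have hδpos : 0 < δ := by rw [hδdef]; positivity
      obtain ⟨T', hT'def⟩ : ∃ T' : ℝ, T' = T + (N + 1) / δ := ⟨_, rfl⟩
      have hq : 0 < (N + 1) / δ := by positivity
      have hTT' : T ≤ T' := by rw [hT'def]; linarith
      have hanti := sirs_anti_sig hξ (fun u => R u + δ * u) hTnn hTT'
        ((hRcont.mono (hsubIci hTnn)).add
          ((continuous_const.mul continuous_id).continuousOn))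
        (fun t ht hcp => ?_)
      · have hRT' : 0 ≤ R T' := hRnonneg T' (hTnn.trans hTT')
        have hRT : R T ≤ N := hRleN T hTnn
        have hfld : δ * T' = δ * T + (N + 1) := by
          rw [hT'def, mul_add, mul_div_cancel₀ _ hδpos.ne']
        linarith
      · have htT : T ≤ t := ht.1.le
        have h0t : 0 ≤ t := hTnn.trans htT
        have hlin : HasDerivWithinAt (fun u : ℝ => δ * u) δ (Set.Ici (0:ℝ)) t := by
          simpa using ((hasDerivAt_id t).const_mul δ).hasDerivWithinAt
        refine ⟨_, (hRd t h0t hcp).add hlin, ?_⟩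
        have := hder t htT hcp (hcA t htT)
        rw [hδdef]
        linarith
    obtain ⟨t2, ht2T, ht2R⟩ := hclaimA
    have ht2nn : 0 ≤ t2 := hTnn.trans ht2T
    -- Claim B: for all t ≥ t2, R t ≤ ε2
    have hclaimB : ∀ t, t2 ≤ t → R t ≤ ε2 := by
      intro t3 ht3
      by_contra hR3
      push_neg at hR3
      set Z := {t | t ∈ Set.Icc t2 t3 ∧ R t ≤ ε2} with hZdef
      have hZne : Z.Nonempty := ⟨t2, ⟨le_rfl, ht3⟩, ht2R.le⟩
      have hZclosed : IsClosed Z := by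
        have : Z = Set.Icc t2 t3 ∩ R ⁻¹' Set.Iic ε2 := rfl
        rw [this]
        exact (hRcont.mono (hsubIci ht2nn)).preimage_isClosed_of_isClosed
          isClosed_Icc isClosed_Iic
      have hZbdd : BddAbove Z := ⟨t3, fun z hz => hz.1.2⟩
      set t1 := sSup Z with ht1def
      have ht1Z : t1 ∈ Z := hZclosed.csSup_mem hZne hZbdd
      have ht1lt : t1 < t3 := by
        rcases eq_or_lt_of_le ht1Z.1.2 with h | h
        · exfalso; have := ht1Z.2; rw [h] at this; linarith
        · exact h
      have ht1nn : 0 ≤ t1 := ht2nn.trans ht1Z.1.1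
      have hRgt : ∀ t, t1 < t → t ≤ t3 → ε2 < R t := by
        intro t hlt hle
        by_contra h
        push_neg at h
        exact absurd (le_csSup hZbdd ⟨⟨ht1Z.1.1.trans hlt.le, hle⟩, h⟩) (not_le.2 hlt)
      have hanti := sirs_anti_sig hξ R ht1nn ht1lt.le (hRcont.mono (hsubIci ht1nn))
        (fun t ht hcp => ?_)
      · have := hRgt t3 ht1lt le_rfl
        linarith [ht1Z.2, hanti]
      · have htT : T ≤ t := ht2T.trans (ht1Z.1.1.trans ht.1.le)
        have h0t : 0 ≤ t := hTnn.trans htT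
        refine ⟨_, hRd t h0t hcp, ?_⟩
        have := hder t htT hcp (hRgt t ht.1 ht.2.le).le
        have hpos : 0 < cmin * ε2 / 2 := by positivity
        linarith
    refine ⟨max t2 0, fun t ht => ?_⟩
    have h1 : t2 ≤ t := (le_max_left _ _).trans ht
    have h2 : 0 ≤ t := (le_max_right _ _).trans ht
    have h3 := hclaimB t h1
    have h4 := hRnonneg t h2
    rw [Real.dist_eq, abs_of_nonneg (by linarith)]
    rw [hε2def] at h3
    linarith
  -- conclude S → N
  have hSeq : ∀ t, S t = N - R t - I t := fun t => by simp [hRdef]; ring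
  have : Tendsto (fun t => N - R t - I t) atTop (nhds (N - 0 - 0)) :=
    (tendsto_const_nhds.sub hRtend).sub hItend
  rw [show N - 0 - 0 = N by ring] at this
  exact this.congr (fun t => (hSeq t).symm)
end

section
/- Suppose b(+)/a(+) ≤ b(−)/a(−) and b(+)/a(+) < N. Then there exists a constant S_min > 0, depending only on N, a, b, c, such that for every switching signal ξ and every solution (S, I) of the switched SIRS system with S(0) > 0, I(0) > 0 and S(0) + I(0) ≤ N, one has liminf_{t→∞} S(t) > S_min. -/
open Filter MeasureTheory

section helperpart
open Set Topology

lemma le_of_deriv_nonneg_except {f f' : ℝ → ℝ} {E : Set ℝ} (hE : E.Finite) :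
    ∀ a b : ℝ, a ≤ b → ContinuousOn f (Icc a b) →
      (∀ x ∈ Ioo a b, x ∉ E → HasDerivWithinAt f (f' x) (Ici x) x) →
      (∀ x ∈ Ioo a b, x ∉ E → 0 ≤ f' x) →
      f a ≤ f b := by
  refine Set.Finite.induction_on
    (motive := fun E _ => ∀ a b : ℝ, a ≤ b → ContinuousOn f (Icc a b) →
      (∀ x ∈ Ioo a b, x ∉ E → HasDerivWithinAt f (f' x) (Ici x) x) →
      (∀ x ∈ Ioo a b, x ∉ E → 0 ≤ f' x) → f a ≤ f b) E hE ?_ ?_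
  · intro a b hab hcont hder hpos
    rcases eq_or_lt_of_le hab with rfl | hab
    · exact le_rfl
    have key : ∀ a' ∈ Ioc a b, f a' ≤ f b := by
      rintro a' ⟨ha1, ha2⟩
      have main : ∀ ⦃x⦄, x ∈ Icc a' b → (fun _ : ℝ => f a') x ≤ f x := by
        refine image_le_of_deriv_right_le_deriv_boundary continuousOn_const
          (fun x _ => hasDerivWithinAt_const x _ (f a')) le_rfl
          (hcont.mono (Icc_subset_Icc ha1.le le_rfl))
          (fun x hx => hder x ⟨lt_of_lt_of_le ha1 hx.1, hx.2⟩ (notMem_empty x))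
          (fun x hx => hpos x ⟨lt_of_lt_of_le ha1 hx.1, hx.2⟩ (notMem_empty x))
      exact main (right_mem_Icc.2 ha2)
    have hne : (𝓝[Ioc a b] a).NeBot := by
      apply mem_closure_iff_nhdsWithin_neBot.1
      rw [closure_Ioc hab.ne]
      exact left_mem_Icc.2 hab.le
    have ht : Tendsto f (𝓝[Ioc a b] a) (𝓝 (f a)) :=
      (hcont a (left_mem_Icc.2 hab.le)).mono Ioc_subset_Icc_self
    exact le_of_tendsto ht (eventually_mem_nhdsWithin.mono key)
  · rintro m E - - IH a b hab hcont hder hpos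
    by_cases hm : m ∈ Ioo a b
    · have h1 : f a ≤ f m := by
        refine IH a m hm.1.le (hcont.mono (Icc_subset_Icc le_rfl hm.2.le)) ?_ ?_
        · exact fun x hx hxE => hder x ⟨hx.1, hx.2.trans hm.2⟩
            (by simp only [mem_insert_iff, not_or]; exact ⟨ne_of_lt hx.2, hxE⟩)
        · exact fun x hx hxE => hpos x ⟨hx.1, hx.2.trans hm.2⟩
            (by simp only [mem_insert_iff, not_or]; exact ⟨ne_of_lt hx.2, hxE⟩)
      have h2 : f m ≤ f b := by
        refine IH m b hm.2.le (hcont.mono (Icc_subset_Icc hm.1.le le_rfl)) ?_ ?_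
        · exact fun x hx hxE => hder x ⟨hm.1.trans hx.1, hx.2⟩
            (by simp only [mem_insert_iff, not_or]; exact ⟨(ne_of_gt hx.1), hxE⟩)
        · exact fun x hx hxE => hpos x ⟨hm.1.trans hx.1, hx.2⟩
            (by simp only [mem_insert_iff, not_or]; exact ⟨(ne_of_gt hx.1), hxE⟩)
      exact h1.trans h2
    · refine IH a b hab hcont ?_ ?_
      · exact fun x hx hxE => hder x hx
          (by simp only [mem_insert_iff, not_or]; exact ⟨fun h => hm (h ▸ hx), hxE⟩)
      · exact fun x hx hxE => hpos x hx
          (by simp only [mem_insert_iff, not_or]; exact ⟨fun h => hm (h ▸ hx), hxE⟩)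

end helperpart

set_option maxHeartbeats 2000000 in
open Set Topology in
/-- `S` is ultimately bounded below by a constant `S_min > 0`
depending only on `N, a, b, c`. -/
theorem sirs_susceptibles_ultimately_bounded_below
    (N : ℝ) (hN : 0 < N) (a b c : Env → ℝ)
    (ha : ∀ σ, 0 < a σ) (hb : ∀ σ, 0 < b σ) (hc : ∀ σ, 0 < c σ)
    (horder : b true / a true ≤ b false / a false)
    (hsup : b true / a true < N) :
    ∃ Smin : ℝ, 0 < Smin ∧
      ∀ (ξ : ℝ → Env), IsSwitchingSignal ξ →
      ∀ (S I : ℝ → ℝ), IsSIRSSolution N a b c ξ S I →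
      0 < S 0 → 0 < I 0 → S 0 + I 0 ≤ N →
      Smin < Filter.liminf S Filter.atTop := by
  -- constants depending only on the parameters
  set aM := max (a true) (a false) with haMdef
  set bm := min (b true) (b false) with hbmdef
  set bM := max (b true) (b false) with hbMdef
  set cm := min (c true) (c false) with hcmdef
  have haM : 0 < aM := lt_max_iff.2 (Or.inl (ha true))
  have hbm : 0 < bm := lt_min (hb true) (hb false)
  have hcm : 0 < cm := lt_min (hc true) (hc false)
  have haσ : ∀ σ, a σ ≤ aM := fun σ => by
    rw [haMdef]; cases σ
    · exact le_max_right _ _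
    · exact le_max_left _ _
  have hbσ : ∀ σ, bm ≤ b σ := fun σ => by
    rw [hbmdef]; cases σ
    · exact min_le_right _ _
    · exact min_le_left _ _
  have hbσ' : ∀ σ, b σ ≤ bM := fun σ => by
    rw [hbMdef]; cases σ
    · exact le_max_right _ _
    · exact le_max_left _ _
  have hcσ : ∀ σ, cm ≤ c σ := fun σ => by
    rw [hcmdef]; cases σ
    · exact min_le_right _ _
    · exact min_le_left _ _
  set δ := min (bm / (2 * aM)) (N / 2) with hδdef
  have hδpos : 0 < δ := lt_min (by positivity) (by positivity)
  have hδN : δ ≤ N / 2 := min_le_right _ _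
  have hδltN : δ < N := by linarith
  set β := bm / 2 with hβdef
  have hβpos : 0 < β := by positivity
  have hδβ : aM * δ ≤ β := by
    have h1 : δ ≤ bm / (2 * aM) := min_le_left _ _
    have h2 := mul_le_mul_of_nonneg_left h1 haM.le
    have h3 : aM * (bm / (2 * aM)) = β := by
      rw [hβdef]; field_simp
    linarith
  set K := aM * N with hKdef
  have hKpos : 0 < K := by rw [hKdef]; positivity
  set γ := cm * (N - δ) / 2 with hγdef
  have hγpos : 0 < γ := by
    rw [hγdef]; exact div_pos (mul_pos hcm (by linarith)) two_pos
  have hγ2 : cm * (N - δ) = 2 * γ := by rw [hγdef]; ring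
  have hXpos : 0 < (aM * δ + cm) * N := by positivity
  have hγX : γ < (aM * δ + cm) * N := by
    rw [hγdef]
    linarith [mul_pos hcm hδpos, mul_pos (mul_pos haM hδpos) hN, mul_pos hcm hN]
  set τ := Real.log ((aM * δ + cm) * N / γ) / β with hτdef
  have hτpos : 0 < τ := by
    rw [hτdef]
    apply div_pos _ hβpos
    apply Real.log_pos
    rw [lt_div_iff₀ hγpos]
    linarith
  have hτkey : (aM * δ + cm) * N * Real.exp (-(β * τ)) = γ := by
    have h1 : β * τ = Real.log ((aM * δ + cm) * N / γ) := by
      rw [hτdef, mul_comm, div_mul_cancel₀ _ hβpos.ne']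
    rw [h1, Real.exp_neg, Real.exp_log (div_pos hXpos hγpos), inv_div, mul_comm,
      div_mul_cancel₀ _ hXpos.ne']
  set Smin' := δ * Real.exp (-(K * τ)) with hSmin'def
  have hSmin'pos : 0 < Smin' := by rw [hSmin'def]; positivity
  have hSmin'δ : Smin' ≤ δ := by
    rw [hSmin'def]
    calc δ * Real.exp (-(K * τ)) ≤ δ * 1 :=
          mul_le_mul_of_nonneg_left (Real.exp_le_one_iff.2 (by linarith [mul_pos hKpos hτpos])) hδpos.le
      _ = δ := mul_one δ
  refine ⟨Smin' / 2, by positivity, ?_⟩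
  intro ξ hξ S I hsol hS0 hI0 hSI0
  obtain ⟨hS, hI, hode⟩ := hsol
  -- the general monotonicity tool
  have key : ∀ (u v : ℝ) (g g' : ℝ → ℝ), 0 ≤ u → u ≤ v →
      ContinuousOn g (Icc u v) →
      (∀ x ∈ Ioo u v, ContPt ξ x → HasDerivWithinAt g (g' x) (Ici x) x) →
      (∀ x ∈ Ioo u v, ContPt ξ x → 0 ≤ g' x) →
      g u ≤ g v := by
    intro u v g g' hu huv hcont hder hpos
    refine le_of_deriv_nonneg_except (f' := g') (hξ.2 v) u v huv hcont ?_ ?_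
    · intro x hx hxE
      refine hder x hx ?_
      by_contra h
      exact hxE ⟨le_trans hu hx.1.le, hx.2.le, h⟩
    · intro x hx hxE
      refine hpos x hx ?_
      by_contra h
      exact hxE ⟨le_trans hu hx.1.le, hx.2.le, h⟩
  have hexp : ∀ (μ x : ℝ), HasDerivAt (fun s => Real.exp (μ * s)) (Real.exp (μ * x) * μ) x := by
    intro μ x
    simpa using ((hasDerivAt_id x).const_mul μ).exp
  have hexpc : ∀ μ : ℝ, Continuous (fun s : ℝ => Real.exp (μ * s)) := fun μ =>
    Real.continuous_exp.comp (continuous_const.mul continuous_id)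
  have hdS : ∀ x, 0 ≤ x → ContPt ξ x →
      HasDerivWithinAt S (-(a (ξ x) * S x * I x) + c (ξ x) * (N - S x - I x)) (Ici x) x :=
    fun x hx hcx => ((hode x hx hcx).1).mono (Ici_subset_Ici.2 hx)
  have hdI : ∀ x, 0 ≤ x → ContPt ξ x →
      HasDerivWithinAt I (a (ξ x) * S x * I x - b (ξ x) * I x) (Ici x) x :=
    fun x hx hcx => ((hode x hx hcx).2).mono (Ici_subset_Ici.2 hx)
  -- Step 1: positivity of I
  have hIpos : ∀ t, 0 ≤ t → 0 < I t := by
    intro t₂ ht₂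
    by_contra hcon
    push_neg at hcon
    have ht₂0 : 0 < t₂ := by
      rcases eq_or_lt_of_le ht₂ with h | h
      · rw [← h] at hcon; linarith
      · exact h
    obtain ⟨C, hC⟩ : ∃ C, ∀ s ∈ Icc (0:ℝ) t₂, |S s| ≤ C := by
      obtain ⟨C, hC⟩ := isCompact_Icc.exists_bound_of_continuousOn (hS.mono Icc_subset_Ici_self)
      exact ⟨C, fun s hs => by simpa [Real.norm_eq_abs] using hC s hs⟩
    have hC0 : 0 ≤ C := le_trans (abs_nonneg _) (hC 0 (left_mem_Icc.2 ht₂))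
    set M := aM * C + bM with hMdef
    set Z := Icc 0 t₂ ∩ I ⁻¹' (Iic 0) with hZdef
    have hZclosed : IsClosed Z :=
      (hI.mono Icc_subset_Ici_self).preimage_isClosed_of_isClosed isClosed_Icc isClosed_Iic
    have hZne : t₂ ∈ Z := ⟨right_mem_Icc.2 ht₂, hcon⟩
    have hZbdd : BddBelow Z := ⟨0, fun s hs => hs.1.1⟩
    set t₀ := sInf Z with ht₀def
    have ht₀Z : t₀ ∈ Z := hZclosed.csInf_mem ⟨t₂, hZne⟩ hZbdd
    have hIt₀ : I t₀ ≤ 0 := ht₀Z.2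
    have ht₀pos : 0 < t₀ := by
      rcases eq_or_lt_of_le ht₀Z.1.1 with h | h
      · exfalso; rw [← h] at hIt₀; linarith
      · exact h
    have hlt : ∀ s, 0 ≤ s → s < t₀ → 0 < I s := by
      intro s hs0 hst
      by_contra h
      push_neg at h
      exact absurd (csInf_le hZbdd ⟨⟨hs0, le_trans hst.le ht₀Z.1.2⟩, h⟩) (not_le.2 hst)
    have hposx : ∀ x ∈ Ioo (0:ℝ) t₀, ContPt ξ x →
        0 ≤ (a (ξ x) * S x * I x - b (ξ x) * I x) * Real.exp (M * x) +
          I x * (Real.exp (M * x) * M) := by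
      intro x hx hcx
      have hIx : 0 < I x := hlt x hx.1.le hx.2
      obtain ⟨hSl, hSu⟩ := abs_le.1 (hC x ⟨hx.1.le, hx.2.le.trans ht₀Z.1.2⟩)
      have hfac : (a (ξ x) * S x * I x - b (ξ x) * I x) * Real.exp (M * x) +
          I x * (Real.exp (M * x) * M) =
          (a (ξ x) * S x - b (ξ x) + M) * (I x * Real.exp (M * x)) := by ring
      rw [hfac]
      apply mul_nonneg _ (mul_nonneg hIx.le (Real.exp_pos _).le)
      have h1 : 0 ≤ a (ξ x) * (S x + C) := mul_nonneg (ha _).le (by linarith)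
      have h2 : a (ξ x) * C ≤ aM * C := mul_le_mul_of_nonneg_right (haσ _) hC0
      have h3 := hbσ' (ξ x)
      rw [hMdef]
      linarith
    have hderx : ∀ x ∈ Ioo (0:ℝ) t₀, ContPt ξ x →
        HasDerivWithinAt (fun s => I s * Real.exp (M * s))
          ((a (ξ x) * S x * I x - b (ξ x) * I x) * Real.exp (M * x) +
            I x * (Real.exp (M * x) * M)) (Ici x) x := by
      intro x hx hcx
      exact (hdI x hx.1.le hcx).mul ((hexp M x).hasDerivWithinAt)
    have hmain : I 0 * Real.exp (M * 0) ≤ I t₀ * Real.exp (M * t₀) :=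
      key 0 t₀ _ _ le_rfl ht₀Z.1.1
        ((hI.mono Icc_subset_Ici_self).mul (hexpc M).continuousOn) hderx hposx
    rw [mul_zero, Real.exp_zero, mul_one] at hmain
    have := (mul_le_mul_of_nonneg_right hIt₀ (Real.exp_pos (M * t₀)).le).trans_eq (zero_mul _)
    linarith
  -- Step 2: S + I ≤ N
  have hTnn : ∀ t, 0 ≤ t → 0 ≤ N - S t - I t := by
    intro t₂ ht₂
    by_contra hcon
    push_neg at hcon
    have ht₂0 : 0 < t₂ := by
      rcases eq_or_lt_of_le ht₂ with h | h
      · rw [← h] at hcon; linarith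
      · exact h
    set A := Icc 0 t₂ ∩ (fun s => N - (S s + I s)) ⁻¹' (Ici 0) with hAdef
    have hcont2 : ContinuousOn (fun s => N - (S s + I s)) (Icc (0:ℝ) t₂) :=
      continuousOn_const.sub ((hS.mono Icc_subset_Ici_self).add (hI.mono Icc_subset_Ici_self))
    have hAclosed : IsClosed A := hcont2.preimage_isClosed_of_isClosed isClosed_Icc isClosed_Ici
    have hA0 : (0:ℝ) ∈ A := ⟨left_mem_Icc.2 ht₂, by simp only [mem_preimage, mem_Ici]; linarith⟩
    have hAbdd : BddAbove A := ⟨t₂, fun s hs => hs.1.2⟩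
    set t₀ := sSup A with ht₀def
    have ht₀A : t₀ ∈ A := hAclosed.csSup_mem ⟨0, hA0⟩ hAbdd
    have ht₀0 : 0 ≤ t₀ := ht₀A.1.1
    have ht₀nn : 0 ≤ N - (S t₀ + I t₀) := ht₀A.2
    have hneg : ∀ s, t₀ < s → s ≤ t₂ → N - (S s + I s) < 0 := by
      intro s hs1 hs2
      by_contra h
      push_neg at h
      exact absurd (le_csSup hAbdd ⟨⟨le_trans ht₀0 hs1.le, hs2⟩, h⟩) (not_le.2 hs1)
    have hposx : ∀ x ∈ Ioo t₀ t₂, ContPt ξ x →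
        0 ≤ -((-(a (ξ x) * S x * I x) + c (ξ x) * (N - S x - I x)) +
          (a (ξ x) * S x * I x - b (ξ x) * I x)) := by
      intro x hx hcx
      have hIx : 0 < I x := hIpos x (le_trans ht₀0 hx.1.le)
      have hTx : N - (S x + I x) < 0 := hneg x hx.1 hx.2.le
      have h1 : 0 < b (ξ x) * I x := mul_pos (hb _) hIx
      have h2 : 0 ≤ c (ξ x) * (S x + I x - N) := mul_nonneg (hc _).le (by linarith)
      linarith
    have hderx : ∀ x ∈ Ioo t₀ t₂, ContPt ξ x →
        HasDerivWithinAt (fun s => N - (S s + I s))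
          (-((-(a (ξ x) * S x * I x) + c (ξ x) * (N - S x - I x)) +
            (a (ξ x) * S x * I x - b (ξ x) * I x))) (Ici x) x := by
      intro x hx hcx
      exact ((hdS x (le_trans ht₀0 hx.1.le) hcx).add (hdI x (le_trans ht₀0 hx.1.le) hcx)).const_sub N
    have hmain : N - (S t₀ + I t₀) ≤ N - (S t₂ + I t₂) :=
      key t₀ t₂ _ _ ht₀0 ht₀A.1.2 (hcont2.mono (Icc_subset_Icc ht₀0 le_rfl)) hderx hposx
    linarith
  -- Step 3: positivity of S
  have hgSnn : ∀ x : ℝ, 0 ≤ S x → 0 < I x → 0 ≤ N - S x - I x →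
      0 ≤ (-(a (ξ x) * S x * I x) + c (ξ x) * (N - S x - I x)) * Real.exp (K * x) +
        S x * (Real.exp (K * x) * K) := by
    intro x hSx hIx hTx
    have hIN : I x ≤ N := by linarith
    have haI : a (ξ x) * I x ≤ K := by
      rw [hKdef]; exact mul_le_mul (haσ _) hIN hIx.le haM.le
    have hfac : (-(a (ξ x) * S x * I x) + c (ξ x) * (N - S x - I x)) * Real.exp (K * x) +
        S x * (Real.exp (K * x) * K) =
        (c (ξ x) * (N - S x - I x) + (K - a (ξ x) * I x) * S x) * Real.exp (K * x) := by ring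
    rw [hfac]
    apply mul_nonneg _ (Real.exp_pos _).le
    have h1 := mul_nonneg (hc (ξ x)).le hTx
    have h2 := mul_nonneg (sub_nonneg.2 haI) hSx
    linarith
  have hSpos : ∀ t, 0 ≤ t → 0 < S t := by
    intro t₂ ht₂
    by_contra hcon
    push_neg at hcon
    have ht₂0 : 0 < t₂ := by
      rcases eq_or_lt_of_le ht₂ with h | h
      · rw [← h] at hcon; linarith
      · exact h
    set Z := Icc 0 t₂ ∩ S ⁻¹' (Iic 0) with hZdef
    have hZclosed : IsClosed Z :=
      (hS.mono Icc_subset_Ici_self).preimage_isClosed_of_isClosed isClosed_Icc isClosed_Iic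
    have hZne : t₂ ∈ Z := ⟨right_mem_Icc.2 ht₂, hcon⟩
    have hZbdd : BddBelow Z := ⟨0, fun s hs => hs.1.1⟩
    set t₀ := sInf Z with ht₀def
    have ht₀Z : t₀ ∈ Z := hZclosed.csInf_mem ⟨t₂, hZne⟩ hZbdd
    have hSt₀ : S t₀ ≤ 0 := ht₀Z.2
    have ht₀pos : 0 < t₀ := by
      rcases eq_or_lt_of_le ht₀Z.1.1 with h | h
      · exfalso; rw [← h] at hSt₀; linarith
      · exact h
    have hlt : ∀ s, 0 ≤ s → s < t₀ → 0 < S s := by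
      intro s hs0 hst
      by_contra h
      push_neg at h
      exact absurd (csInf_le hZbdd ⟨⟨hs0, le_trans hst.le ht₀Z.1.2⟩, h⟩) (not_le.2 hst)
    have hposx : ∀ x ∈ Ioo (0:ℝ) t₀, ContPt ξ x →
        0 ≤ (-(a (ξ x) * S x * I x) + c (ξ x) * (N - S x - I x)) * Real.exp (K * x) +
          S x * (Real.exp (K * x) * K) := by
      intro x hx hcx
      exact hgSnn x (hlt x hx.1.le hx.2).le (hIpos x hx.1.le) (hTnn x hx.1.le)
    have hderx : ∀ x ∈ Ioo (0:ℝ) t₀, ContPt ξ x →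
        HasDerivWithinAt (fun s => S s * Real.exp (K * s))
          ((-(a (ξ x) * S x * I x) + c (ξ x) * (N - S x - I x)) * Real.exp (K * x) +
            S x * (Real.exp (K * x) * K)) (Ici x) x := by
      intro x hx hcx
      exact (hdS x hx.1.le hcx).mul ((hexp K x).hasDerivWithinAt)
    have hmain : S 0 * Real.exp (K * 0) ≤ S t₀ * Real.exp (K * t₀) :=
      key 0 t₀ _ _ le_rfl ht₀Z.1.1
        ((hS.mono Icc_subset_Ici_self).mul (hexpc K).continuousOn) hderx hposx
    rw [mul_zero, Real.exp_zero, mul_one] at hmain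
    have := (mul_le_mul_of_nonneg_right hSt₀ (Real.exp_pos (K * t₀)).le).trans_eq (zero_mul _)
    linarith
  have hIleN : ∀ t, 0 ≤ t → I t ≤ N := fun t ht => by
    have := hTnn t ht; have := hSpos t ht; linarith
  have hSleN : ∀ t, 0 ≤ t → S t ≤ N := fun t ht => by
    have := hTnn t ht; have := hIpos t ht; linarith
  -- exponential lower bound for S, globally
  have hC2 : ∀ u v, 0 ≤ u → u ≤ v → S u * Real.exp (K * u) ≤ S v * Real.exp (K * v) := by
    intro u v hu huv
    refine key u v (fun s => S s * Real.exp (K * s))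
      (fun x => (-(a (ξ x) * S x * I x) + c (ξ x) * (N - S x - I x)) * Real.exp (K * x) +
        S x * (Real.exp (K * x) * K)) hu huv
      ((hS.mono fun s hs => le_trans hu hs.1).mul (hexpc K).continuousOn) ?_ ?_
    · intro x hx hcx
      exact (hdS x (le_trans hu hx.1.le) hcx).mul ((hexp K x).hasDerivWithinAt)
    · intro x hx hcx
      have hx0 : 0 ≤ x := le_trans hu hx.1.le
      exact hgSnn x (hSpos x hx0).le (hIpos x hx0) (hTnn x hx0)
  have hC2' : ∀ u v, 0 ≤ u → u ≤ v → S u * Real.exp (-(K * (v - u))) ≤ S v := by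
    intro u v hu huv
    have h := hC2 u v hu huv
    have h2 := mul_le_mul_of_nonneg_right h (Real.exp_pos (-(K * v))).le
    have e3 : S u * Real.exp (K * u) * Real.exp (-(K * v)) = S u * Real.exp (-(K * (v - u))) := by
      rw [mul_assoc, ← Real.exp_add]
      congr 1
      ring
    have e4 : S v * Real.exp (K * v) * Real.exp (-(K * v)) = S v := by
      rw [mul_assoc, ← Real.exp_add]
      simp
    rw [e3, e4] at h2
    exact h2
  -- exponential decay of I while S ≤ δ
  have hC1 : ∀ t₁ t₂, 0 ≤ t₁ → t₁ ≤ t₂ → (∀ s ∈ Icc t₁ t₂, S s ≤ δ) →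
      ∀ s ∈ Icc t₁ t₂, I s * Real.exp (β * s) ≤ I t₁ * Real.exp (β * t₁) := by
    intro t₁ t₂ h1 h12 hsmall s hs
    have hderx : ∀ x ∈ Ioo t₁ s, ContPt ξ x →
        HasDerivWithinAt (fun r => -(I r * Real.exp (β * r)))
          (-((a (ξ x) * S x * I x - b (ξ x) * I x) * Real.exp (β * x) +
            I x * (Real.exp (β * x) * β))) (Ici x) x := by
      intro x hx hcx
      exact ((hdI x (le_trans h1 hx.1.le) hcx).mul ((hexp β x).hasDerivWithinAt)).neg
    have hposx : ∀ x ∈ Ioo t₁ s, ContPt ξ x →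
        0 ≤ -((a (ξ x) * S x * I x - b (ξ x) * I x) * Real.exp (β * x) +
          I x * (Real.exp (β * x) * β)) := by
      intro x hx hcx
      have hx0 : 0 ≤ x := le_trans h1 hx.1.le
      have hSx := hSpos x hx0
      have hIx := hIpos x hx0
      have hSδ : S x ≤ δ := hsmall x ⟨hx.1.le, hx.2.le.trans hs.2⟩
      have haS : a (ξ x) * S x ≤ aM * δ := mul_le_mul (haσ _) hSδ hSx.le haM.le
      have hfac : -((a (ξ x) * S x * I x - b (ξ x) * I x) * Real.exp (β * x) +
          I x * (Real.exp (β * x) * β)) =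
          (b (ξ x) - a (ξ x) * S x - β) * (I x * Real.exp (β * x)) := by ring
      rw [hfac]
      apply mul_nonneg _ (mul_nonneg hIx.le (Real.exp_pos _).le)
      have hbb := hbσ (ξ x)
      have hb2 : bm = 2 * β := by rw [hβdef]; ring
      linarith
    have hmain : -(I t₁ * Real.exp (β * t₁)) ≤ -(I s * Real.exp (β * s)) :=
      key t₁ s _ _ h1 hs.1
        (((hI.mono fun r hr => le_trans h1 hr.1).mul (hexpc β).continuousOn).neg) hderx hposx
    linarith
  -- linear growth of S after time τ in a small-S interval
  have hC3 : ∀ t₁ u v, 0 ≤ t₁ → t₁ + τ ≤ u → u ≤ v → (∀ s ∈ Icc t₁ v, S s ≤ δ) →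
      S u - γ * u ≤ S v - γ * v := by
    intro t₁ u v ht₁ hu huv hsmall
    have ht₁u : t₁ ≤ u := by linarith
    have hu0 : 0 ≤ u := le_trans ht₁ ht₁u
    have ht₁v : t₁ ≤ v := le_trans ht₁u huv
    have hderx : ∀ x ∈ Ioo u v, ContPt ξ x →
        HasDerivWithinAt (fun s => S s - γ * s)
          ((-(a (ξ x) * S x * I x) + c (ξ x) * (N - S x - I x)) - γ) (Ici x) x := by
      intro x hx hcx
      have hid : HasDerivWithinAt (fun s : ℝ => γ * s) γ (Ici x) x := by
        simpa using ((hasDerivAt_id x).const_mul γ).hasDerivWithinAt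
      exact (hdS x (le_trans hu0 hx.1.le) hcx).sub hid
    have hposx : ∀ x ∈ Ioo u v, ContPt ξ x →
        0 ≤ (-(a (ξ x) * S x * I x) + c (ξ x) * (N - S x - I x)) - γ := by
      intro x hx hcx
      have hx0 : 0 ≤ x := le_trans hu0 hx.1.le
      have ht₁x : t₁ ≤ x := le_trans ht₁u hx.1.le
      have hSx := hSpos x hx0
      have hIx := hIpos x hx0
      have hTx := hTnn x hx0
      have hxv : x ≤ v := hx.2.le
      have hSδ : S x ≤ δ := hsmall x ⟨ht₁x, hxv⟩
      have hdecay := hC1 t₁ v ht₁ ht₁v hsmall x ⟨ht₁x, hxv⟩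
      have hIt₁N : I t₁ ≤ N := hIleN t₁ ht₁
      have hstep : I x ≤ N * Real.exp (β * t₁) * Real.exp (-(β * x)) := by
        have h2 : I x * Real.exp (β * x) ≤ N * Real.exp (β * t₁) :=
          le_trans hdecay (mul_le_mul_of_nonneg_right hIt₁N (Real.exp_pos _).le)
        have h3 := mul_le_mul_of_nonneg_right h2 (Real.exp_pos (-(β * x))).le
        calc I x = I x * Real.exp (β * x) * Real.exp (-(β * x)) := by
              rw [mul_assoc, ← Real.exp_add]; simp
          _ ≤ N * Real.exp (β * t₁) * Real.exp (-(β * x)) := h3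
      have hstep2 : Real.exp (β * t₁) * Real.exp (-(β * x)) ≤ Real.exp (-(β * τ)) := by
        rw [← Real.exp_add]
        apply Real.exp_le_exp.2
        have hτx : t₁ + τ ≤ x := le_trans hu hx.1.le
        linarith [mul_nonneg hβpos.le (show (0:ℝ) ≤ x - t₁ - τ by linarith)]
      have hIx' : I x ≤ N * Real.exp (-(β * τ)) := by
        calc I x ≤ N * Real.exp (β * t₁) * Real.exp (-(β * x)) := hstep
          _ = N * (Real.exp (β * t₁) * Real.exp (-(β * x))) := by ring
          _ ≤ N * Real.exp (-(β * τ)) := mul_le_mul_of_nonneg_left hstep2 hN.le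
      have hIγ : (aM * δ + cm) * I x ≤ γ := by
        calc (aM * δ + cm) * I x ≤ (aM * δ + cm) * (N * Real.exp (-(β * τ))) :=
            mul_le_mul_of_nonneg_left hIx' (by positivity)
          _ = (aM * δ + cm) * N * Real.exp (-(β * τ)) := by ring
          _ = γ := hτkey
      have h1 : a (ξ x) * S x * I x ≤ aM * δ * I x :=
        mul_le_mul_of_nonneg_right (mul_le_mul (haσ _) hSδ hSx.le haM.le) hIx.le
      have h2 : cm * (N - S x - I x) ≤ c (ξ x) * (N - S x - I x) :=
        mul_le_mul_of_nonneg_right (hcσ _) hTx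
      have h3 : cm * S x ≤ cm * δ := mul_le_mul_of_nonneg_left hSδ hcm.le
      linarith [hγ2, hIγ, h1, h2, h3]
    have hcont3 : ContinuousOn (fun s => S s - γ * s) (Icc u v) :=
      (hS.mono fun s hs => le_trans hu0 hs.1).sub
        (continuous_const.mul continuous_id).continuousOn
    exact key u v _ _ hu0 huv hcont3 hderx hposx
  -- dips below δ are bounded
  have hDip : ∀ t₁ t₂, 0 ≤ t₁ → t₁ ≤ t₂ → (∀ s ∈ Icc t₁ t₂, S s ≤ δ) →
      S t₁ * Real.exp (-(K * τ)) ≤ S t₂ := by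
    intro t₁ t₂ h1 h12 hsmall
    by_cases hcase : t₂ ≤ t₁ + τ
    · have h := hC2' t₁ t₂ h1 h12
      have e1 : Real.exp (-(K * τ)) ≤ Real.exp (-(K * (t₂ - t₁))) := by
        apply Real.exp_le_exp.2
        linarith [mul_nonneg hKpos.le (show (0:ℝ) ≤ τ - (t₂ - t₁) by linarith)]
      calc S t₁ * Real.exp (-(K * τ)) ≤ S t₁ * Real.exp (-(K * (t₂ - t₁))) :=
          mul_le_mul_of_nonneg_left e1 (hSpos t₁ h1).le
        _ ≤ S t₂ := h
    · push_neg at hcase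
      have h1' : S t₁ * Real.exp (-(K * τ)) ≤ S (t₁ + τ) := by
        have := hC2' t₁ (t₁ + τ) h1 (by linarith)
        simpa using this
      have h2 : S (t₁ + τ) - γ * (t₁ + τ) ≤ S t₂ - γ * t₂ :=
        hC3 t₁ (t₁ + τ) t₂ h1 le_rfl hcase.le hsmall
      linarith [mul_nonneg hγpos.le (show (0:ℝ) ≤ t₂ - (t₁ + τ) by linarith)]
  -- S eventually reaches δ
  have hEsc : ∃ T₀, 0 ≤ T₀ ∧ δ ≤ S T₀ := by
    by_contra hcon
    push_neg at hcon
    set t := τ + (δ - S τ) / γ + 1 with htdef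
    have hSτ : S τ < δ := hcon τ hτpos.le
    have hdivnn : 0 ≤ (δ - S τ) / γ := div_nonneg (by linarith) hγpos.le
    have ht0 : 0 ≤ t := by rw [htdef]; linarith [hτpos]
    have hτt : τ ≤ t := by rw [htdef]; linarith
    have h := hC3 0 τ t le_rfl (by linarith) hτt (fun s hs => (hcon s hs.1).le)
    have hdiv : γ * ((δ - S τ) / γ) = δ - S τ := mul_div_cancel₀ _ hγpos.ne'
    have hlast := hcon t ht0
    have hγt : γ * t = γ * τ + (δ - S τ) + γ := by
      rw [htdef, mul_add, mul_add, hdiv, mul_one]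
    linarith
  obtain ⟨T₀, hT₀0, hT₀δ⟩ := hEsc
  -- after T₀, S never goes below Smin'
  have hFinal : ∀ t, T₀ ≤ t → Smin' ≤ S t := by
    intro t ht
    by_contra hcon
    push_neg at hcon
    have htlt : T₀ < t := by
      rcases eq_or_lt_of_le ht with h | h
      · rw [← h] at hcon; linarith
      · exact h
    set A := Icc T₀ t ∩ S ⁻¹' (Ici δ) with hAdef
    have hAclosed : IsClosed A :=
      (hS.mono fun s hs => le_trans hT₀0 hs.1).preimage_isClosed_of_isClosed
        isClosed_Icc isClosed_Ici
    have hAne : T₀ ∈ A := ⟨left_mem_Icc.2 ht, hT₀δ⟩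
    have hAbdd : BddAbove A := ⟨t, fun s hs => hs.1.2⟩
    set t₁ := sSup A with ht₁def
    have ht₁A : t₁ ∈ A := hAclosed.csSup_mem ⟨T₀, hAne⟩ hAbdd
    have ht₁0 : 0 ≤ t₁ := le_trans hT₀0 ht₁A.1.1
    have hδt₁ : δ ≤ S t₁ := ht₁A.2
    have ht₁lt : t₁ < t := by
      rcases eq_or_lt_of_le ht₁A.1.2 with h | h
      · exfalso; rw [h] at hδt₁; linarith
      · exact h
    have hnot : ∀ s, t₁ < s → s ≤ t → S s < δ := by
      intro s hs1 hs2
      by_contra h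
      push_neg at h
      exact absurd (le_csSup hAbdd ⟨⟨le_trans ht₁A.1.1 hs1.le, hs2⟩, h⟩) (not_le.2 hs1)
    have hkey2 : ∀ t₁' ∈ Ioc t₁ t, S t₁' * Real.exp (-(K * τ)) ≤ S t := by
      rintro t₁' ⟨h1, h2⟩
      exact hDip t₁' t (le_trans ht₁0 h1.le) h2
        (fun s hs => (hnot s (lt_of_lt_of_le h1 hs.1) hs.2).le)
    have hne : (𝓝[Ioc t₁ t] t₁).NeBot := by
      apply mem_closure_iff_nhdsWithin_neBot.1
      rw [closure_Ioc ht₁lt.ne]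
      exact left_mem_Icc.2 ht₁lt.le
    have htend : Tendsto (fun s => S s * Real.exp (-(K * τ))) (𝓝[Ioc t₁ t] t₁)
        (𝓝 (S t₁ * Real.exp (-(K * τ)))) := by
      apply Tendsto.mul_const
      exact (hS t₁ (mem_Ici.2 ht₁0)).mono fun s hs => le_trans ht₁0 hs.1.le
    have hlim : S t₁ * Real.exp (-(K * τ)) ≤ S t :=
      le_of_tendsto htend (eventually_mem_nhdsWithin.mono hkey2)
    have hfin : Smin' ≤ S t₁ * Real.exp (-(K * τ)) := by
      rw [hSmin'def]
      exact mul_le_mul_of_nonneg_right hδt₁ (Real.exp_pos _).le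
    linarith
  have hev : ∀ᶠ x in atTop, Smin' ≤ S x := eventually_atTop.2 ⟨T₀, hFinal⟩
  have hbdd : IsBoundedUnder (· ≤ ·) atTop S :=
    isBoundedUnder_of_eventually_le (a := N) (eventually_atTop.2 ⟨0, fun t ht => hSleN t ht⟩)
  have hliminf : Smin' ≤ Filter.liminf S Filter.atTop :=
    le_liminf_of_le hbdd.isCoboundedUnder_ge hev
  linarith
end
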